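/- arXiv:2011.11457 — 7 statements merged into one kernel-verified Lean document; each statement's English description precedes it below -/
import Mathlib

section
/- For all natural numbers s and k, the alternating sum ∑_{l=0}^{s} (-1)^l * C(s,l) * C(2s+k-l, s+k-l) equals 1, where C(n,j) denotes the binomial coefficient. -/
open Polynomial Finset

lemma aux_poly (s k : ℕ) :
    ((X : ℤ[X]) ^ s * (1 + X) ^ (s + k)) =
      ∑ l ∈ Finset.range (s + 1),
        Polynomial.C ((-1 : ℤ) ^ l * (Nat.choose s l : ℤ)) * (1 + X) ^ (2 * s + k - l) := by
  have h : (X : ℤ[X]) ^ s = ((1 + X) - 1) ^ s := by ring_nf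
  rw [h, sub_pow, Finset.sum_mul, ← Finset.sum_range_reflect]
  apply Finset.sum_congr rfl
  intro l hl
  rw [Finset.mem_range] at hl
  have hl' : l ≤ s := by omega
  have h1 : s - (s - l) = l := by omega
  have h2 : s - l + (s + k) = 2 * s + k - l := by omega
  have hc : Nat.choose s (s - l) = Nat.choose s l := Nat.choose_symm hl'
  have hsign : (-1 : ℤ[X]) ^ (s - l + s) = (-1) ^ l := by
    have : s - l + s = l + 2 * (s - l) := by omega
    rw [this, pow_add, pow_mul]; simp
  simp only [Nat.add_sub_cancel]
  rw [one_pow, mul_one, hsign, hc]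
  rw [mul_comm ((-1 : ℤ[X]) ^ l * (1 + X) ^ (s - l)) _, ← mul_assoc, mul_assoc _ _ ((1+X)^(s+k)),
    ← pow_add, h2]
  rw [map_mul, map_pow, map_neg, map_one, map_natCast]
  ring

lemma aux_sum (s k : ℕ) :
    ∑ l ∈ Finset.range (s + 1),
      (-1 : ℤ) ^ l * (Nat.choose s l : ℤ) * (Nat.choose (2 * s + k - l) s : ℤ) = 1 := by
  have h := congrArg (fun p : ℤ[X] => p.coeff s) (aux_poly s k)
  simp only [finset_sum_coeff, coeff_C_mul, coeff_one_add_X_pow] at h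
  rw [← h]
  have := Polynomial.coeff_X_pow_mul ((1 + X : ℤ[X]) ^ (s + k)) s 0
  simp only [zero_add] at this
  rw [this, coeff_one_add_X_pow, Nat.choose_zero_right, Nat.cast_one]

/-- For all natural numbers `s` and `k`,
`∑_{l=0}^{s} (-1)^l * C(s,l) * C(2s+k-l, s+k-l) = 1`. -/
theorem alternating_binomial_sum_eq_one (s k : ℕ) :
    ∑ l ∈ Finset.range (s + 1),
      (-1 : ℤ) ^ l * (Nat.choose s l : ℤ) *
        (Nat.choose (2 * s + k - l) (s + k - l) : ℤ) = 1 := by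
  have hcongr : ∀ l ∈ Finset.range (s + 1),
      (-1 : ℤ) ^ l * (Nat.choose s l : ℤ) * (Nat.choose (2 * s + k - l) (s + k - l) : ℤ) =
      (-1 : ℤ) ^ l * (Nat.choose s l : ℤ) * (Nat.choose (2 * s + k - l) s : ℤ) := by
    intro l hl
    rw [Finset.mem_range] at hl
    have h1 : s ≤ 2 * s + k - l := by omega
    have h2 : 2 * s + k - l - s = s + k - l := by omega
    have h3 := Nat.choose_symm h1
    rw [h2] at h3
    rw [h3]
  rw [Finset.sum_congr rfl hcongr]
  exact aux_sum s k
end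

section
/- For natural numbers s ≥ 1, k, and a real (or rational) parameter m with m/2 + 2s + k - l - 1 ≠ 0 for all 0 ≤ l ≤ s-1, one has ∑_{l=0}^{s-1} (-1)^l * (s/(m/2 + 2s + k - l - 1)) * C(s-1, l) * C(2s+k-l, s+k-l) = 1 - (m/2 - 1)_s / (m/2 + s + k)_s, where (a)_n is the Pochhammer symbol. -/
open Finset

lemma key1 (s : ℕ) : ∀ c : ℕ,
    ∑ j ∈ range (s+1), (-1:ℝ)^j * (s.choose j) * ((s+c+j).choose s) = (-1)^s := by
  induction s with
  | zero => intro c; simp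
  | succ s ih =>
    intro c
    rw [Finset.sum_range_succ']
    have expand : ∀ j ∈ range (s+1),
        (-1:ℝ)^(j+1) * (((s+1).choose (j+1) : ℕ)) * (((s+1+c+(j+1)).choose (s+1) : ℕ))
        = (-((-1:ℝ)^j * (s.choose j) * ((s+(c+1)+j).choose s)))
          - (((-1:ℝ)^j * (s.choose j) * ((s+c+1+j).choose (s+1)))
             - ((-1:ℝ)^(j+1) * (s.choose (j+1)) * ((s+c+1+(j+1)).choose (s+1)))) := by
      intro j _
      have h1 : (s+1).choose (j+1) = s.choose j + s.choose (j+1) := Nat.choose_succ_succ _ _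
      have h2 : (s+1+c+(j+1)).choose (s+1) = (s+c+1+j).choose s + (s+c+1+j).choose (s+1) := by
        rw [show s+1+c+(j+1) = (s+c+1+j)+1 from by ring]
        exact Nat.choose_succ_succ _ _
      have h3 : s+(c+1)+j = s+c+1+j := by ring
      have h4 : s+c+1+(j+1) = s+1+c+(j+1) := by ring
      rw [h1, h4, h2, h3]
      push_cast
      ring
    rw [Finset.sum_congr rfl expand, Finset.sum_sub_distrib, Finset.sum_neg_distrib,
      ih (c+1), Finset.sum_range_sub' (fun j => (-1:ℝ)^j * (s.choose j) * ((s+c+1+j).choose (s+1)))]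
    simp [Nat.choose_eq_zero_of_lt (show s < s+1 by omega),
      show s+1+c+0 = s+c+1+0 from by omega]
    ring

lemma key2 (s c : ℕ) :
    ∑ l ∈ range (s+1), (-1:ℝ)^l * (s.choose l) * ((2*s+c-l).choose s) = 1 := by
  rw [← Finset.sum_range_reflect]
  have congr1 : ∀ j ∈ range (s+1),
      (-1:ℝ)^(s+1-1-j) * (s.choose (s+1-1-j)) * ((2*s+c-(s+1-1-j)).choose s)
      = (-1)^s * ((-1:ℝ)^j * (s.choose j) * ((s+c+j).choose s)) := by
    intro j hj
    rw [Finset.mem_range] at hj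
    have hjs : j ≤ s := by omega
    have e1 : s+1-1-j = s-j := by omega
    have e2 : 2*s+c-(s-j) = s+c+j := by omega
    have e3 : s.choose (s-j) = s.choose j := Nat.choose_symm hjs
    have e4 : (-1:ℝ)^(s-j) = (-1)^s * (-1)^j := by
      have h : (-1:ℝ)^(s-j) * (-1)^j = (-1)^s := by
        rw [← pow_add]; congr 1; omega
      have hj2 : ((-1:ℝ)^j) * ((-1)^j) = 1 := by
        rw [← pow_add, show j+j = 2*j from by ring, pow_mul]; norm_num
      calc (-1:ℝ)^(s-j) = (-1)^(s-j) * (((-1:ℝ)^j) * ((-1)^j)) := by rw [hj2]; ring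
        _ = ((-1:ℝ)^(s-j) * (-1)^j) * (-1)^j := by ring
        _ = (-1:ℝ)^s * (-1)^j := by rw [h]
    rw [e1, e2, e3, e4]; ring
  rw [Finset.sum_congr rfl congr1, ← Finset.mul_sum, key1 s c, ← pow_add,
    show s+s = 2*s from by ring, pow_mul]
  norm_num

lemma F1 (s l : ℕ) (hs : 1 ≤ s) (hl : l < s) :
    s * ((s-1).choose l) = (s-l) * (s.choose l) := by
  obtain ⟨t, rfl⟩ : ∃ t, s = t + 1 := ⟨s - 1, by omega⟩
  simp only [Nat.add_sub_cancel]
  rw [Nat.add_one_mul_choose_eq, Nat.choose_succ_right_eq]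
  ring

lemma F2 (s k l : ℕ) (hl : l ≤ s) :
    (s+1) * ((2*s+k+2-l).choose (s+k+1-l)) = (s+k+2-l) * ((2*s+k+2-l).choose (s+k+2-l)) := by
  have h := Nat.choose_succ_right_eq (2*s+k+2-l) (s+k+1-l)
  rw [show s+k+1-l+1 = s+k+2-l from by omega] at h
  rw [show 2*s+k+2-l-(s+k+1-l) = s+1 from by omega] at h
  simpa [mul_comm] using h.symm

lemma F3 (s k : ℕ) :
    (k+2) * ((s+k+2).choose (k+2)) = (s+1) * ((s+k+2).choose (k+1)) := by
  have h := Nat.choose_succ_right_eq (s+k+2) (k+1)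
  rw [show s+k+2-(k+1) = s+1 from by omega, show k+1+1 = k+2 from rfl] at h
  simpa [mul_comm] using h

lemma main_aux (s : ℕ) (hs : 1 ≤ s) : ∀ (k : ℕ) (x : ℝ), 1 < x →
    ∑ l ∈ Finset.range s,
      (-1 : ℝ) ^ l * ((s : ℝ) / (x + 2 * s + k - l - 1)) *
        (Nat.choose (s - 1) l : ℝ) * (Nat.choose (2 * s + k - l) (s + k - l) : ℝ) =
      1 - (∏ i ∈ Finset.range s, (x - 1 + i)) / (∏ i ∈ Finset.range s, (x + s + k + i)) := by
  induction s, hs using Nat.le_induction with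
  | base =>
    intro k x hx
    rw [Finset.sum_range_one, Finset.prod_range_one, Finset.prod_range_one]
    rw [show 2*1+k-0 = k+2 from by omega, show 1+k-0 = k+1 from by omega,
      Nat.choose_succ_self_right]
    have hk : (0:ℝ) ≤ k := Nat.cast_nonneg k
    have h3 : 1 + (k:ℝ) + x ≠ 0 := by nlinarith
    push_cast
    simp only [pow_zero, Nat.choose_self, Nat.cast_one]
    rw [show x + 2 * 1 + (k:ℝ) - 0 - 1 = 1 + (k:ℝ) + x from by ring,
      show x + 1 + (k:ℝ) + 0 = 1 + (k:ℝ) + x from by ring]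
    field_simp
    ring
  | succ s hs ih =>
    intro k x hx
    have hk0 : (0:ℝ) ≤ k := Nat.cast_nonneg k
    have hs1 : (1:ℝ) ≤ s := by exact_mod_cast hs
    have hA : x + (s:ℝ) + k + 1 ≠ 0 := by nlinarith
    have hD : (∏ i ∈ Finset.range s, (x + (s:ℝ) + ((k+2:ℕ):ℝ) + (i:ℝ))) ≠ 0 := by
      apply Finset.prod_ne_zero_iff.mpr
      intro i _
      have : (0:ℝ) ≤ i := Nat.cast_nonneg i
      push_cast
      nlinarith
    -- rewrite RHS products
    have hNum : ∏ i ∈ Finset.range (s+1), (x - 1 + (i:ℝ)) =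
        (∏ i ∈ Finset.range s, (x - 1 + (i:ℝ))) * (x - 1 + s) := by
      rw [Finset.prod_range_succ]
    have hDen : ∏ i ∈ Finset.range (s+1), (x + ((s+1:ℕ):ℝ) + k + i) =
        (x + (s:ℝ) + k + 1) * ∏ i ∈ Finset.range s, (x + (s:ℝ) + ((k+2:ℕ):ℝ) + i) := by
      rw [Finset.prod_range_succ']
      rw [Finset.prod_congr rfl (fun i _ => show x + ((s+1:ℕ):ℝ) + k + ((i+1:ℕ):ℝ)
        = x + (s:ℝ) + ((k+2:ℕ):ℝ) + i from by push_cast; ring)]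
      push_cast; ring
    rw [hNum, hDen, Finset.sum_range_succ]
    -- per-term transformation for l < s
    have congrT : ∀ l ∈ Finset.range s,
        (-1:ℝ) ^ l * (((s+1:ℕ):ℝ) / (x + 2 * ((s+1:ℕ):ℝ) + (k:ℝ) - (l:ℝ) - 1)) *
            (((s + 1 - 1).choose l : ℕ):ℝ) * (((2 * (s + 1) + k - l).choose (s + 1 + k - l) : ℕ):ℝ)
        = (x + (s:ℝ) - 1) / (x + (s:ℝ) + (k:ℝ) + 1) *
            ((-1:ℝ) ^ l * ((s:ℝ) / (x + 2 * (s:ℝ) + ((k+2:ℕ):ℝ) - (l:ℝ) - 1)) *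
              (((s - 1).choose l : ℕ):ℝ) * (((2 * s + (k+2) - l).choose (s + (k+2) - l) : ℕ):ℝ))
          + ((k:ℝ) + 2) / (x + (s:ℝ) + (k:ℝ) + 1) *
            ((-1:ℝ) ^ l * ((s.choose l : ℕ):ℝ) * (((2 * s + (k+2) - l).choose (s + (k+2) - l) : ℕ):ℝ)) := by
      intro l hl
      rw [Finset.mem_range] at hl
      have hl' : (l:ℝ) < s := by exact_mod_cast hl
      have hs0 : (s:ℝ) ≠ 0 := by nlinarith
      have hsp1 : (s:ℝ) + 1 ≠ 0 := by nlinarith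
      -- align nat choose arguments
      rw [show s + 1 - 1 = s from by omega, show 2 * (s+1) + k - l = 2*s+k+2-l from by omega,
        show s + 1 + k - l = s+k+1-l from by omega, show 2 * s + (k+2) - l = 2*s+k+2-l from by omega,
        show s + (k+2) - l = s+k+2-l from by omega]
      -- align denominators
      rw [show x + 2 * ((s+1:ℕ):ℝ) + (k:ℝ) - (l:ℝ) - 1
            = x + 2 * (s:ℝ) + ((k+2:ℕ):ℝ) - (l:ℝ) - 1 from by push_cast; ring]
      -- choose identities
      have f1 : (s:ℝ) * (((s-1).choose l : ℕ):ℝ) = ((s:ℝ) - (l:ℝ)) * ((s.choose l : ℕ):ℝ) := by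
        have h := F1 s l hs hl
        have h' : ((s * ((s-1).choose l) : ℕ) : ℝ) = (((s-l) * s.choose l : ℕ):ℝ) :=
          Nat.cast_inj.mpr h
        push_cast [Nat.cast_sub hl.le] at h'
        linarith [h']
      have f2 : ((s:ℝ) + 1) * (((2*s+k+2-l).choose (s+k+1-l) : ℕ):ℝ)
          = ((s:ℝ) + (k:ℝ) + 2 - (l:ℝ)) * (((2*s+k+2-l).choose (s+k+2-l) : ℕ):ℝ) := by
        have h := F2 s k l hl.le
        have h' : (((s+1) * ((2*s+k+2-l).choose (s+k+1-l)) : ℕ) : ℝ)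
            = (((s+k+2-l) * ((2*s+k+2-l).choose (s+k+2-l)) : ℕ):ℝ) :=
          Nat.cast_inj.mpr h
        push_cast [Nat.cast_sub (show l ≤ s+k+2 from by omega)] at h'
        linarith [h']
      have n0 : (((s-1).choose l : ℕ):ℝ) = ((s:ℝ) - (l:ℝ)) * ((s.choose l : ℕ):ℝ) / (s:ℝ) := by
        rw [eq_div_iff hs0]; linear_combination f1
      have q1 : (((2*s+k+2-l).choose (s+k+1-l) : ℕ):ℝ)
          = ((s:ℝ) + (k:ℝ) + 2 - (l:ℝ)) * (((2*s+k+2-l).choose (s+k+2-l) : ℕ):ℝ) / ((s:ℝ)+1) := by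
        rw [eq_div_iff hsp1]; linear_combination f2
      rw [n0, q1, show ((s+1:ℕ):ℝ) = (s:ℝ)+1 from by push_cast; ring,
        show ((k+2:ℕ):ℝ) = (k:ℝ)+2 from by push_cast; ring]
      have hd' : x + 2 * (s:ℝ) + ((k:ℝ)+2) - (l:ℝ) - 1 ≠ 0 := by nlinarith
      have hd'' : x + (s:ℝ) * 2 + ((k:ℝ)+2) - (l:ℝ) - 1 ≠ 0 := by nlinarith
      field_simp
      ring
    rw [Finset.sum_congr rfl congrT, Finset.sum_add_distrib, ← Finset.mul_sum, ← Finset.mul_sum,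
      ih (k+2) x hx]
    have hU : ∑ i ∈ Finset.range s,
        (-1:ℝ) ^ i * ((s.choose i : ℕ):ℝ) * (((2 * s + (k+2) - i).choose (s + (k+2) - i) : ℕ):ℝ)
        = 1 - (-1:ℝ)^s * (((s+k+2).choose (k+2) : ℕ):ℝ) := by
      have base := key2 s (k+2)
      have congrU : ∀ l ∈ Finset.range (s+1),
          (-1:ℝ) ^ l * ((s.choose l : ℕ):ℝ) * (((2*s+(k+2)-l).choose s : ℕ):ℝ)
          = (-1:ℝ) ^ l * ((s.choose l : ℕ):ℝ) * (((2 * s + (k+2) - l).choose (s + (k+2) - l) : ℕ):ℝ) := by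
        intro l hl
        rw [Finset.mem_range] at hl
        have : (2*s+(k+2)-l).choose (s+(k+2)-l) = (2*s+(k+2)-l).choose s := by
          rw [show s+(k+2)-l = (2*s+(k+2)-l) - s from by omega]
          exact Nat.choose_symm (by omega)
        rw [this]
      rw [Finset.sum_congr rfl congrU, Finset.sum_range_succ,
        show 2*s+(k+2)-s = s+k+2 from by omega, show s+(k+2)-s = k+2 from by omega,
        Nat.choose_self] at base
      push_cast at base ⊢
      linarith [base]
    rw [hU]
    -- simplify the l = s term
    rw [show 2*(s+1)+k-s = s+k+2 from by omega, show s+1+k-s = k+1 from by omega,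
      show s+1-1 = s from by omega, Nat.choose_self,
      show x + 2 * ((s+1:ℕ):ℝ) + (k:ℝ) - (s:ℝ) - 1 = x + (s:ℝ) + (k:ℝ) + 1 from by push_cast; ring,
      show ((s+1:ℕ):ℝ) = (s:ℝ)+1 from by push_cast; ring]
    have f3 : ((k:ℝ) + 2) * (((s+k+2).choose (k+2) : ℕ):ℝ)
        = ((s:ℝ) + 1) * (((s+k+2).choose (k+1) : ℕ):ℝ) := by exact_mod_cast F3 s k
    set P := ∏ i ∈ Finset.range s, (x + (s:ℝ) + ((k+2:ℕ):ℝ) + (i:ℝ)) with hP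
    set N := ∏ i ∈ Finset.range s, (x - 1 + (i:ℝ)) with hN
    field_simp
    linear_combination (-(-1:ℝ)^s) * P * f3


/-- For natural numbers `s ≥ 1`, `k`, and a real parameter `m > 2` (so that no denominator
vanishes), one has
`∑_{l=0}^{s-1} (-1)^l (s/(m/2+2s+k-l-1)) C(s-1,l) C(2s+k-l, s+k-l)
  = 1 - (m/2-1)_s/(m/2+s+k)_s`,
where `(a)_n` is the Pochhammer symbol (rising factorial). -/
theorem alternating_sum_pochhammer (s k : ℕ) (hs : 1 ≤ s) (m : ℝ) (hm : 2 < m)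
    (hden : ∀ l < s, (m / 2 + 2 * s + k - l - 1 : ℝ) ≠ 0) :
    ∑ l ∈ Finset.range s,
      (-1 : ℝ) ^ l * ((s : ℝ) / (m / 2 + 2 * s + k - l - 1)) *
        (Nat.choose (s - 1) l : ℝ) * (Nat.choose (2 * s + k - l) (s + k - l) : ℝ) =
      1 - (∏ i ∈ Finset.range s, (m / 2 - 1 + i)) /
          (∏ i ∈ Finset.range s, (m / 2 + s + k + i)) := by
  exact main_aux s hs k (m / 2) (by linarith)
end

section
/- For natural numbers s, k, and real m > 2, the sum ∑_{j=0}^{s} (-1)^j * Γ(m/2 + 2s + k - j) / (j! * Γ(s-j+1) * Γ(s+k-j+1)) equals Γ(m/2 + s) * Γ(m/2 + s + k) / (s! * (s+k)! * Γ(m/2)). -/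
open Finset

/-- Rising factorial (ascending Pochhammer) of a real number. -/
noncomputable def ra (a : ℝ) (n : ℕ) : ℝ := ∏ i ∈ Finset.range n, (a + i)

lemma ra_zero (a : ℝ) : ra a 0 = 1 := by simp [ra]

lemma ra_succ (a : ℝ) (n : ℕ) : ra a (n + 1) = ra a n * (a + n) := by
  simp [ra, Finset.prod_range_succ]

lemma ra_succ' (a : ℝ) (n : ℕ) : ra a (n + 1) = a * ra (a + 1) n := by
  rw [ra, Finset.prod_range_succ', ra]
  push_cast
  rw [add_zero, mul_comm]
  congr 1
  exact Finset.prod_congr rfl fun i _ => by ring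

lemma ra_pos {a : ℝ} (ha : 0 < a) (n : ℕ) : 0 < ra a n :=
  Finset.prod_pos fun i _ => by positivity

lemma ra_add (a : ℝ) (p q : ℕ) : ra a (p + q) = ra a p * ra (a + p) q := by
  induction q with
  | zero => simp [ra_zero]
  | succ q ih =>
      rw [show p + (q + 1) = (p + q) + 1 from rfl, ra_succ, ih, ra_succ]
      push_cast
      ring

lemma ra_factorial (n t : ℕ) : ra ((n : ℝ) + 1) t * (Nat.factorial n : ℝ)
    = (Nat.factorial (n + t) : ℝ) := by
  induction t with
  | zero => simp [ra_zero]
  | succ t ih =>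
      rw [ra_succ, show n + (t + 1) = (n + t) + 1 from rfl, Nat.factorial_succ]
      push_cast
      push_cast at ih
      nlinarith [ih]

lemma Gamma_ra {a : ℝ} (ha : 0 < a) (n : ℕ) :
    Real.Gamma (a + n) = Real.Gamma a * ra a n := by
  induction n with
  | zero => simp [ra_zero]
  | succ n ih =>
      have h1 : a + ((n : ℝ) + 1) = (a + n) + 1 := by ring
      have h2 : a + (n : ℝ) ≠ 0 := by positivity
      rw [show ((n + 1 : ℕ) : ℝ) = (n : ℝ) + 1 by push_cast; ring, h1,
        Real.Gamma_add_one h2, ih, ra_succ]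
      ring

/-- auxiliary function for the telescoping proof of `key_sum`. -/
noncomputable def G (s : ℕ) (c b : ℝ) (i : ℕ) : ℝ :=
  (-1 : ℝ) ^ (s + 1 - i) * (Nat.choose s i : ℝ) * ra b i * ra (c + i + 1) (s + 1 - i)

/-- The key combinatorial identity, proved by induction on `s`. -/
lemma key_sum : ∀ (s : ℕ) (c b : ℝ),
    ∑ i ∈ Finset.range (s + 1),
      (-1 : ℝ) ^ (s - i) * (Nat.choose s i : ℝ) * ra b i * ra (c + i + 1) (s - i)
    = ∏ u ∈ Finset.range s, (b - c - (u + 1)) := by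
  intro s
  induction s with
  | zero => intro c b; simp [ra_zero]
  | succ s ih =>
      intro c b
      rw [Finset.sum_range_succ']
      have h1 : ∀ i ∈ Finset.range (s + 1),
          (-1 : ℝ) ^ (s + 1 - (i + 1)) * (Nat.choose (s + 1) (i + 1) : ℝ) * ra b (i + 1) *
              ra (c + (↑(i + 1) : ℝ) + 1) (s + 1 - (i + 1))
          = (G s c b (i + 1) - G s c b i)
            + (b - c - 1) * ((-1 : ℝ) ^ (s - i) * (Nat.choose s i : ℝ) * ra b i *
                ra ((c + 1) + i + 1) (s - i)) := by
        intro i hi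
        have hi' : i ≤ s := Nat.lt_succ_iff.mp (Finset.mem_range.mp hi)
        have e1 : s + 1 - (i + 1) = s - i := by omega
        clear hi
        have e2 : s + 1 - i = (s - i) + 1 := by omega
        have e3 : c + (↑(i + 1) : ℝ) + 1 = (c + ↑i + 1) + 1 := by push_cast; ring
        have e4 : (c + 1) + (i : ℝ) + 1 = (c + ↑i + 1) + 1 := by ring
        rw [e1, e3, G, G, e1, e2, e3, e4, ra_succ' (c + ↑i + 1) (s - i),
          ra_succ b i, Nat.choose_succ_succ, pow_succ]
        push_cast
        ring
      rw [Finset.sum_congr rfl h1, Finset.sum_add_distrib,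
        Finset.sum_range_sub (G s c b), ← Finset.mul_sum, ih (c + 1) b]
      have hG0 : G s c b 0 = (-1 : ℝ) ^ (s + 1 - 0) * (Nat.choose (s + 1) 0 : ℝ) *
          ra b 0 * ra (c + (↑(0 : ℕ) : ℝ) + 1) (s + 1 - 0) := by
        simp [G]
      have hGs : G s c b (s + 1) = 0 := by
        simp [G, Nat.choose_succ_self]
      rw [hGs, ← hG0, Finset.prod_range_succ']
      have h2 : ∀ u ∈ Finset.range s, (b - c - ((↑(u + 1) : ℝ) + 1))
          = (b - (c + 1) - (↑u + 1)) := by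
        intro u hu; push_cast; ring
      rw [Finset.prod_congr rfl h2]
      push_cast
      ring

/-- For natural numbers `s`, `k` and real `m > 2`,
`∑_{j=0}^{s} (-1)^j Γ(m/2+2s+k-j)/(j! Γ(s-j+1) Γ(s+k-j+1))
  = Γ(m/2+s) Γ(m/2+s+k) / (s! (s+k)! Γ(m/2))`. -/
theorem gamma_alternating_sum (s k : ℕ) (m : ℝ) (hm : 2 < m) :
    ∑ j ∈ Finset.range (s + 1),
      (-1 : ℝ) ^ j * Real.Gamma (m / 2 + 2 * s + k - j) /
        ((Nat.factorial j : ℝ) * Real.Gamma ((s : ℝ) - j + 1) *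
          Real.Gamma ((s : ℝ) + k - j + 1)) =
      Real.Gamma (m / 2 + s) * Real.Gamma (m / 2 + s + k) /
        ((Nat.factorial s : ℝ) * (Nat.factorial (s + k) : ℝ) * Real.Gamma (m / 2)) := by
  set a : ℝ := m / 2 with ha_def
  have ha : 0 < a := by rw [ha_def]; linarith
  have hΓ : Real.Gamma a ≠ 0 := (Real.Gamma_pos_of_pos ha).ne'
  set b : ℝ := a + s + k with hb_def
  -- the key sum, reflected
  have hkey : ∑ i ∈ Finset.range (s + 1),
      (-1 : ℝ) ^ (s - i) * (Nat.choose s i : ℝ) * ra b i * ra ((k : ℝ) + i + 1) (s - i)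
      = ra a s := by
    rw [key_sum s (k : ℝ) b]
    rw [ra, ← Finset.prod_range_reflect]
    refine Finset.prod_congr rfl fun u hu => ?_
    have hu' : u ≤ s - 1 := by
      have := Finset.mem_range.mp hu; omega
    have : ((s - 1 - u : ℕ) : ℝ) = (s : ℝ) - 1 - u := by
      have h1 := Finset.mem_range.mp hu
      push_cast [Nat.cast_sub (by omega : u ≤ s - 1), Nat.cast_sub (by omega : 1 ≤ s)]
      ring
    rw [this, hb_def]
    ring
  have hrefl : ∑ j ∈ Finset.range (s + 1),
      (-1 : ℝ) ^ (s - (s - j)) * (Nat.choose s (s - j) : ℝ) * ra b (s - j) *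
        ra ((k : ℝ) + (↑(s - j) : ℝ) + 1) (s - (s - j))
      = ra a s := by
    rw [← hkey, ← Finset.sum_range_reflect]
    refine Finset.sum_congr rfl fun j hj => ?_
    have : s + 1 - 1 - j = s - j := by omega
    rw [this]
    have hjs : j ≤ s := Nat.lt_succ_iff.mp (Finset.mem_range.mp hj)
    rw [show s - (s - j) = j from by omega]
  -- rewrite each term of the LHS
  have hterm : ∀ j ∈ Finset.range (s + 1),
      (-1 : ℝ) ^ j * Real.Gamma (a + 2 * s + k - j) /
        ((Nat.factorial j : ℝ) * Real.Gamma ((s : ℝ) - j + 1) *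
          Real.Gamma ((s : ℝ) + k - j + 1))
      = (Real.Gamma a * ra a (s + k) / ((Nat.factorial s : ℝ) * (Nat.factorial (s + k) : ℝ))) *
        ((-1 : ℝ) ^ (s - (s - j)) * (Nat.choose s (s - j) : ℝ) * ra b (s - j) *
          ra ((k : ℝ) + (↑(s - j) : ℝ) + 1) (s - (s - j))) := by
    intro j hj
    have hjs : j ≤ s := Nat.lt_succ_iff.mp (Finset.mem_range.mp hj)
    have e0 : s - (s - j) = j := by omega
    -- Gamma of the big argument
    have e1 : a + 2 * (s : ℝ) + k - j = a + ((2 * s + k - j : ℕ) : ℝ) := by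
      push_cast [Nat.cast_sub (by omega : j ≤ 2 * s + k)]
      ring
    have e2 : Real.Gamma (a + 2 * (s : ℝ) + k - j) = Real.Gamma a * (ra a (s + k) * ra b (s - j)) := by
      rw [e1, Gamma_ra ha, show 2 * s + k - j = (s + k) + (s - j) by omega, ra_add]
      have : a + ((s + k : ℕ) : ℝ) = b := by rw [hb_def]; push_cast; ring
      rw [this]
    -- Gamma of the factorial arguments
    have e3 : Real.Gamma ((s : ℝ) - j + 1) = (Nat.factorial (s - j) : ℝ) := by
      have : (s : ℝ) - j + 1 = ((s - j : ℕ) : ℝ) + 1 := by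
        push_cast [Nat.cast_sub hjs]; ring
      rw [this, Real.Gamma_nat_eq_factorial]
    have e4 : Real.Gamma ((s : ℝ) + k - j + 1) = (Nat.factorial (s + k - j) : ℝ) := by
      have : (s : ℝ) + k - j + 1 = ((s + k - j : ℕ) : ℝ) + 1 := by
        push_cast [Nat.cast_sub (by omega : j ≤ s + k)]; ring
      rw [this, Real.Gamma_nat_eq_factorial]
    -- factorial identities
    have F1 : (Nat.choose s (s - j) : ℝ) * (Nat.factorial (s - j) : ℝ) *
        (Nat.factorial j : ℝ) = (Nat.factorial s : ℝ) := by
      have := Nat.choose_mul_factorial_mul_factorial (Nat.sub_le s j)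
      rw [show s - (s - j) = j by omega] at this
      exact_mod_cast congrArg (Nat.cast : ℕ → ℝ) this
    have F2 : ra ((k : ℝ) + (↑(s - j) : ℝ) + 1) j * (Nat.factorial (s + k - j) : ℝ)
        = (Nat.factorial (s + k) : ℝ) := by
      have harg : (k : ℝ) + (↑(s - j) : ℝ) + 1 = ((s + k - j : ℕ) : ℝ) + 1 := by
        push_cast [Nat.cast_sub hjs, Nat.cast_sub (by omega : j ≤ s + k)]; ring
      rw [harg, ra_factorial, show s + k - j + j = s + k by omega]
    -- nonvanishing
    have n1 : (Nat.factorial j : ℝ) ≠ 0 := by positivity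
    have n2 : (Nat.factorial (s - j) : ℝ) ≠ 0 := by positivity
    have n3 : (Nat.factorial (s + k - j) : ℝ) ≠ 0 := by positivity
    have n4 : (Nat.factorial s : ℝ) ≠ 0 := by positivity
    have n5 : (Nat.factorial (s + k) : ℝ) ≠ 0 := by positivity
    have key2 : (1 : ℝ) / ((Nat.factorial j : ℝ) * (Nat.factorial (s - j) : ℝ) *
        (Nat.factorial (s + k - j) : ℝ))
        = ((Nat.choose s (s - j) : ℝ) * ra ((k : ℝ) + (↑(s - j) : ℝ) + 1) j) /
          ((Nat.factorial s : ℝ) * (Nat.factorial (s + k) : ℝ)) := by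
      rw [div_eq_div_iff (by positivity) (by positivity)]
      linear_combination (-(Nat.factorial (s + k) : ℝ)) * F1 +
        (-((Nat.choose s (s - j) : ℝ) * (Nat.factorial (s - j) : ℝ) *
          (Nat.factorial j : ℝ))) * F2
    rw [e0, e2, e3, e4]
    calc ((-1 : ℝ) ^ j * (Real.Gamma a * (ra a (s + k) * ra b (s - j)))) /
          ((Nat.factorial j : ℝ) * (Nat.factorial (s - j) : ℝ) * (Nat.factorial (s + k - j) : ℝ))
        = ((-1 : ℝ) ^ j * (Real.Gamma a * (ra a (s + k) * ra b (s - j)))) *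
            ((1 : ℝ) / ((Nat.factorial j : ℝ) * (Nat.factorial (s - j) : ℝ) *
              (Nat.factorial (s + k - j) : ℝ))) := by ring
      _ = ((-1 : ℝ) ^ j * (Real.Gamma a * (ra a (s + k) * ra b (s - j)))) *
            (((Nat.choose s (s - j) : ℝ) * ra ((k : ℝ) + (↑(s - j) : ℝ) + 1) j) /
              ((Nat.factorial s : ℝ) * (Nat.factorial (s + k) : ℝ))) := by rw [key2]
      _ = Real.Gamma a * ra a (s + k) / ((Nat.factorial s : ℝ) * (Nat.factorial (s + k) : ℝ)) *
            ((-1 : ℝ) ^ j * (Nat.choose s (s - j) : ℝ) * ra b (s - j) *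
              ra ((k : ℝ) + (↑(s - j) : ℝ) + 1) j) := by ring
  rw [Finset.sum_congr rfl hterm, ← Finset.mul_sum, hrefl]
  have e5 : Real.Gamma (a + s) = Real.Gamma a * ra a s := Gamma_ra ha s
  have e6 : Real.Gamma (a + s + k) = Real.Gamma a * ra a (s + k) := by
    rw [show a + (s : ℝ) + k = a + ((s + k : ℕ) : ℝ) by push_cast; ring, Gamma_ra ha]
  rw [e5, e6]
  have n4 : (Nat.factorial s : ℝ) ≠ 0 := by positivity
  have n5 : (Nat.factorial (s + k) : ℝ) ≠ 0 := by positivity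
  field_simp
end

section
/- Let τ = t + i·s with t, s orthonormal unit vectors in ℝ^m. For every natural number k, ∫_{S^{m-1}} ⟨ω,τ†⟩^k ⟨ω,τ⟩^k dS(ω) = (-1)^k · 2π^{m/2} · Γ(k+1)/Γ(k + m/2). -/
open MeasureTheory Set Metric Finset


private lemma gauss_moment (a : ℕ) :
    ∫ x : ℝ, x ^ (2 * a) * Real.exp (-x ^ 2) = Real.Gamma (a + 1 / 2) := by
  have h1 : ∀ x : ℝ, x ^ (2 * a) * Real.exp (-x ^ 2)
      = |x| ^ (2 * a) * Real.exp (-|x| ^ 2) := by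
    intro x
    rw [sq_abs, (even_two_mul a).pow_abs]
  rw [show (fun x : ℝ => x ^ (2 * a) * Real.exp (-x ^ 2))
      = fun x => |x| ^ (2 * a) * Real.exp (-|x| ^ 2) from funext h1]
  rw [integral_comp_abs (f := fun x : ℝ => x ^ (2 * a) * Real.exp (-x ^ 2))]
  have h2 := integral_rpow_mul_exp_neg_rpow (p := 2) (q := ((2 * a : ℕ) : ℝ))
    two_pos (lt_of_lt_of_le neg_one_lt_zero (Nat.cast_nonneg _))
  rw [show ((2:ℝ)) = ((2:ℕ):ℝ) by norm_num] at h2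
  simp only [Real.rpow_natCast] at h2
  rw [h2]
  rw [show (((2*a : ℕ):ℝ) + 1) / ((2:ℕ):ℝ) = (a:ℝ) + 1/2 by push_cast; ring]
  ring

private lemma gamma_sum (k : ℕ) :
    ∑ j ∈ Finset.range (k + 1), (k.choose j : ℝ) *
      (Real.Gamma ((j : ℝ) + 1 / 2) * Real.Gamma ((k : ℝ) - j + 1 / 2))
      = Real.pi * k.factorial := by
  induction k with
  | zero =>
    simp only [Finset.range_one, Finset.sum_singleton, Nat.choose_self, Nat.cast_one,
      Nat.cast_zero, Nat.factorial_zero, one_mul, mul_one, sub_zero, zero_add]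
    rw [Real.Gamma_one_half_eq, Real.mul_self_sqrt Real.pi_pos.le]
  | succ k ih =>
    set f : ℕ → ℝ := fun j => (k.choose j : ℝ) *
      (Real.Gamma ((j : ℝ) + 1 / 2) * Real.Gamma ((k : ℝ) + 1 - j + 1 / 2)) with hf
    set g : ℕ → ℝ := fun i => (k.choose i : ℝ) *
      (Real.Gamma ((i : ℝ) + 1 + 1 / 2) * Real.Gamma ((k : ℝ) - i + 1 / 2)) with hg
    have hsplit : ∀ i ∈ Finset.range (k + 1),
        (((k+1).choose (i+1) : ℝ)) *
          (Real.Gamma (((i+1 : ℕ) : ℝ) + 1 / 2) * Real.Gamma (((k+1 : ℕ) : ℝ) - ((i+1 : ℕ) : ℝ) + 1 / 2))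
        = g i + f (i + 1) := by
      intro i _
      simp only [hf, hg]
      rw [Nat.choose_succ_succ]
      simp only [Nat.succ_eq_add_one]
      push_cast
      ring
    calc ∑ j ∈ Finset.range (k + 1 + 1), ((k+1).choose j : ℝ) *
          (Real.Gamma ((j : ℝ) + 1 / 2) * Real.Gamma (((k+1 : ℕ) : ℝ) - j + 1 / 2))
        = ∑ i ∈ Finset.range (k + 1), ((k+1).choose (i+1) : ℝ) *
            (Real.Gamma (((i+1 : ℕ) : ℝ) + 1 / 2) * Real.Gamma (((k+1 : ℕ) : ℝ) - ((i+1:ℕ)) + 1 / 2))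
          + ((k+1).choose 0 : ℝ) *
            (Real.Gamma (((0:ℕ) : ℝ) + 1 / 2) * Real.Gamma (((k+1 : ℕ) : ℝ) - ((0:ℕ):ℝ) + 1 / 2)) := by
          rw [Finset.sum_range_succ']
      _ = ∑ i ∈ Finset.range (k + 1), (g i + f (i+1)) + f 0 := by
          rw [Finset.sum_congr rfl hsplit]
          congr 1
          simp only [hf, Nat.choose_zero_right, Nat.cast_one, Nat.cast_zero, one_mul]
          push_cast
          ring_nf
      _ = ∑ i ∈ Finset.range (k + 1), g i + (∑ i ∈ Finset.range (k + 1), f (i+1) + f 0) := by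
          rw [Finset.sum_add_distrib]; ring
      _ = ∑ i ∈ Finset.range (k + 1), g i + ∑ j ∈ Finset.range (k + 2), f j := by
          congr 1
          exact (Finset.sum_range_succ' f (k+1)).symm
      _ = ∑ i ∈ Finset.range (k + 1), g i + ∑ j ∈ Finset.range (k + 1), f j := by
          have hfz : f (k+1) = 0 := by simp [hf, Nat.choose_succ_self]
          congr 1
          rw [Finset.sum_range_succ, hfz, add_zero]
      _ = ∑ j ∈ Finset.range (k + 1), (g j + f j) := by
          rw [Finset.sum_add_distrib]
      _ = ((k:ℝ) + 1) * ∑ j ∈ Finset.range (k + 1), (k.choose j : ℝ) *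
            (Real.Gamma ((j : ℝ) + 1 / 2) * Real.Gamma ((k : ℝ) - j + 1 / 2)) := by
          rw [Finset.mul_sum]
          refine Finset.sum_congr rfl fun j hj => ?_
          have hj' : (j : ℝ) ≤ k := by
            exact_mod_cast Nat.lt_succ_iff.mp (Finset.mem_range.mp hj)
          have h1 : Real.Gamma ((j:ℝ) + 1 + 1/2) = ((j:ℝ) + 1/2) * Real.Gamma ((j:ℝ) + 1/2) := by
            rw [show (j:ℝ) + 1 + 1/2 = ((j:ℝ) + 1/2) + 1 by ring,
              Real.Gamma_add_one (by positivity)]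
          have h2 : Real.Gamma ((k:ℝ) + 1 - j + 1/2)
              = ((k:ℝ) - j + 1/2) * Real.Gamma ((k:ℝ) - j + 1/2) := by
            rw [show (k:ℝ) + 1 - j + 1/2 = ((k:ℝ) - j + 1/2) + 1 by ring,
              Real.Gamma_add_one (by nlinarith)]
          simp only [hf, hg, h1, h2]
          ring
      _ = Real.pi * (k+1).factorial := by
          rw [ih, Nat.factorial_succ]
          push_cast
          ring

private lemma volumeIoiPow_integral (n : ℕ) (f : ℝ → ℝ) :
    ∫ r : Ioi (0:ℝ), f r ∂(Measure.volumeIoiPow n) = ∫ r in Ioi (0:ℝ), r ^ n * f r := by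
  rw [Measure.volumeIoiPow]
  simp only [ENNReal.ofReal]
  rw [integral_withDensity_eq_integral_smul
    ((measurable_subtype_coe.pow_const _).real_toNNReal)]
  rw [integral_subtype_comap measurableSet_Ioi (fun a : ℝ => Real.toNNReal (a ^ n) • f a)]
  refine setIntegral_congr_fun measurableSet_Ioi fun x hx => ?_
  rw [NNReal.smul_def, Real.coe_toNNReal _ (pow_nonneg (le_of_lt hx) _), smul_eq_mul]

private lemma polar_integral {E : Type*} [NormedAddCommGroup E] [NormedSpace ℝ E]
    [MeasurableSpace E] [BorelSpace E] [FiniteDimensional ℝ E] [Nontrivial E]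
    (μ : Measure E) [μ.IsAddHaarMeasure] (k : ℕ) (H : E → ℝ)
    (hH : ∀ (c : ℝ), 0 < c → ∀ x : E, H (c • x) = c ^ (2*k) * H x) :
    ∫ x, H x * Real.exp (-‖x‖^2) ∂μ =
      (∫ ω : sphere (0:E) 1, H ω ∂μ.toSphere) *
        ∫ r in Ioi (0:ℝ), r ^ (Module.finrank ℝ E - 1) * (r ^ (2*k) * Real.exp (-r^2)) := by
  calc
    ∫ x, H x * Real.exp (-‖x‖ ^ 2) ∂μ
        = ∫ x : ({0}ᶜ : Set E), H x * Real.exp (-‖(x:E)‖^2) ∂(μ.comap (↑)) := by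
          rw [integral_subtype_comap (measurableSet_singleton 0).compl
            (fun x => H x * Real.exp (-‖x‖^2)), restrict_compl_singleton]
    _ = ∫ p : sphere (0:E) 1 × Ioi (0:ℝ),
          H p.1 * ((p.2:ℝ)^(2*k) * Real.exp (-(p.2:ℝ)^2))
          ∂(μ.toSphere.prod (.volumeIoiPow (Module.finrank ℝ E - 1))) := by
          rw [← (μ.measurePreserving_homeomorphUnitSphereProd).integral_comp
            (Homeomorph.measurableEmbedding _)
            (fun p : sphere (0:E) 1 × Ioi (0:ℝ) =>
              H p.1 * ((p.2:ℝ)^(2*k) * Real.exp (-(p.2:ℝ)^2)))]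
          refine integral_congr_ae (Filter.Eventually.of_forall fun x => ?_)
          have hx : (x : E) ≠ 0 := x.2
          have hn : ‖(x:E)‖ ≠ 0 := norm_ne_zero_iff.mpr hx
          simp only [homeomorphUnitSphereProd_apply_fst_coe,
            homeomorphUnitSphereProd_apply_snd_coe]
          rw [hH _ (inv_pos.mpr (norm_pos_iff.mpr hx)) _]
          rw [inv_pow]
          field_simp
    _ = (∫ ω : sphere (0:E) 1, H ω ∂μ.toSphere) *
          ∫ r : Ioi (0:ℝ), ((r:ℝ)^(2*k) * Real.exp (-(r:ℝ)^2))
            ∂(Measure.volumeIoiPow (Module.finrank ℝ E - 1)) :=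
      integral_prod_mul (f := fun ω : sphere (0:E) 1 => H ω)
        (g := fun r : Ioi (0:ℝ) => (r:ℝ)^(2*k) * Real.exp (-(r:ℝ)^2))
    _ = _ := by
          rw [volumeIoiPow_integral (Module.finrank ℝ E - 1)
            (fun r => r ^ (2*k) * Real.exp (-r^2))]

private lemma integrable_pow_exp (n : ℕ) :
    Integrable (fun x : ℝ => x ^ n * Real.exp (-x ^ 2)) := by
  have h := integrable_rpow_mul_exp_neg_mul_sq (b := 1) one_pos
    (s := (n : ℝ)) (lt_of_lt_of_le neg_one_lt_zero (Nat.cast_nonneg _))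
  simpa only [Real.rpow_natCast, neg_mul, one_mul] using h

private lemma gauss_pi (m k : ℕ) (i₀ i₁ : Fin m) (hne : i₀ ≠ i₁) :
    ∫ y : Fin m → ℝ, ((y i₀) ^ 2 + (y i₁) ^ 2) ^ k * Real.exp (-∑ j, (y j) ^ 2)
      = Real.sqrt Real.pi ^ (m - 2) * (Real.pi * k.factorial) := by
  set f : ℕ → Fin m → ℝ → ℝ := fun j l x =>
    x ^ (2 * (if l = i₀ then j else if l = i₁ then k - j else 0)) * Real.exp (-x ^ 2) with hfdef
  have hpoint : ∀ y : Fin m → ℝ,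
      ((y i₀) ^ 2 + (y i₁) ^ 2) ^ k * Real.exp (-∑ j, (y j) ^ 2)
        = ∑ j ∈ Finset.range (k + 1), (k.choose j : ℝ) * ∏ l, f j l (y l) := by
    intro y
    have hexp : Real.exp (-∑ j, (y j) ^ 2) = ∏ l, Real.exp (-(y l) ^ 2) := by
      rw [← Finset.sum_neg_distrib, Real.exp_sum]
    have hprod : ∀ j, ∏ l, f j l (y l)
        = ((y i₀) ^ (2 * j) * (y i₁) ^ (2 * (k - j))) * ∏ l, Real.exp (-(y l) ^ 2) := by
      intro j
      rw [hfdef]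
      simp only
      rw [Finset.prod_mul_distrib]
      congr 1
      rw [← Finset.mul_prod_erase univ _ (Finset.mem_univ i₀),
        ← Finset.mul_prod_erase _ _ (Finset.mem_erase.mpr ⟨hne.symm, Finset.mem_univ i₁⟩)]
      rw [if_pos rfl, if_neg hne.symm, if_pos rfl]
      have hrest : ∏ l ∈ (univ.erase i₀).erase i₁,
          (y l) ^ (2 * (if l = i₀ then j else if l = i₁ then k - j else 0)) = 1 := by
        refine Finset.prod_eq_one fun l hl => ?_
        obtain ⟨hl1, hl0, _⟩ := Finset.mem_erase.mp hl |>.imp id (fun h => Finset.mem_erase.mp h)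
        rw [if_neg hl0, if_neg hl1, mul_zero, pow_zero]
      rw [hrest, mul_one]
    rw [hexp, add_pow, Finset.sum_mul]
    refine Finset.sum_congr rfl fun j hj => ?_
    rw [hprod j, ← pow_mul, ← pow_mul]
    ring
  simp_rw [hpoint]
  rw [integral_finset_sum (μ := (volume : Measure (Fin m → ℝ))) _ (fun j hj => ((Integrable.fintype_prod
    (f := fun l => f j l) (fun l => integrable_pow_exp _)).const_mul _))]
  have hterm : ∀ j ∈ Finset.range (k + 1),
      ∫ y : Fin m → ℝ, (k.choose j : ℝ) * ∏ l, f j l (y l)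
        = (k.choose j : ℝ) * ((Real.Gamma ((j:ℝ) + 1/2) * Real.Gamma (((k - j : ℕ):ℝ) + 1/2))
            * Real.Gamma ((1:ℝ)/2) ^ (m - 2)) := by
    intro j hj
    rw [integral_const_mul, integral_fintype_prod_volume_eq_prod (f := fun l => f j l)]
    congr 1
    rw [← Finset.mul_prod_erase univ _ (Finset.mem_univ i₀),
      ← Finset.mul_prod_erase _ _ (Finset.mem_erase.mpr ⟨hne.symm, Finset.mem_univ i₁⟩)]
    have h0 : ∫ x : ℝ, f j i₀ x = Real.Gamma ((j:ℝ) + 1/2) := by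
      rw [hfdef]; simp only [if_pos rfl]; exact gauss_moment j
    have h1 : ∫ x : ℝ, f j i₁ x = Real.Gamma (((k - j : ℕ):ℝ) + 1/2) := by
      rw [hfdef]; simp only [if_neg hne.symm, if_pos rfl]; exact gauss_moment (k - j)
    have h2 : ∀ l ∈ (univ.erase i₀).erase i₁, ∫ x : ℝ, f j l x = Real.Gamma ((1:ℝ)/2) := by
      intro l hl
      obtain ⟨hl1, hl0, _⟩ := Finset.mem_erase.mp hl |>.imp id (fun h => Finset.mem_erase.mp h)
      rw [hfdef]; simp only [if_neg hl0, if_neg hl1, mul_zero, pow_zero]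
      have := gauss_moment 0
      simpa using this
    rw [h0, h1, Finset.prod_congr rfl h2, Finset.prod_const]
    have hcard : ((univ.erase i₀).erase i₁).card = m - 2 := by
      rw [Finset.card_erase_of_mem (Finset.mem_erase.mpr ⟨hne.symm, Finset.mem_univ i₁⟩),
        Finset.card_erase_of_mem (Finset.mem_univ i₀), Finset.card_univ, Fintype.card_fin,
        Nat.sub_sub]
    rw [hcard]
    ring
  rw [Finset.sum_congr rfl hterm]
  have hhalf : Real.Gamma ((1:ℝ)/2) = Real.sqrt Real.pi := Real.Gamma_one_half_eq
  calc ∑ j ∈ Finset.range (k+1), (k.choose j : ℝ) *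
        ((Real.Gamma ((j:ℝ) + 1/2) * Real.Gamma (((k - j : ℕ):ℝ) + 1/2))
          * Real.Gamma ((1:ℝ)/2) ^ (m - 2))
      = Real.sqrt Real.pi ^ (m - 2) * ∑ j ∈ Finset.range (k+1), (k.choose j : ℝ) *
          (Real.Gamma ((j:ℝ) + 1/2) * Real.Gamma ((k:ℝ) - j + 1/2)) := by
        rw [Finset.mul_sum]
        refine Finset.sum_congr rfl fun j hj => ?_
        have hjk : j ≤ k := Nat.lt_succ_iff.mp (Finset.mem_range.mp hj)
        rw [hhalf, Nat.cast_sub hjk]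
        ring
    _ = Real.sqrt Real.pi ^ (m - 2) * (Real.pi * k.factorial) := by rw [gamma_sum]

open Set Metric Finset in
private lemma radial_value (m k : ℕ) (hm : 2 ≤ m) :
    ∫ r in Set.Ioi (0:ℝ), r ^ (m - 1) * (r ^ (2*k) * Real.exp (-r^2))
      = Real.Gamma ((k:ℝ) + (m:ℝ)/2) / 2 := by
  have h : ∀ r : ℝ, r ^ (m-1) * (r ^ (2*k) * Real.exp (-r^2))
      = r ^ (2*k + (m-1)) * Real.exp (-r^2) := by intro r; rw [pow_add]; ring
  simp_rw [h]
  have h2 := integral_rpow_mul_exp_neg_rpow (p := 2) (q := ((2*k + (m-1) : ℕ):ℝ))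
    two_pos (lt_of_lt_of_le neg_one_lt_zero (Nat.cast_nonneg _))
  rw [show ((2:ℝ)) = ((2:ℕ):ℝ) by norm_num] at h2
  simp only [Real.rpow_natCast] at h2
  rw [h2, show ((2*k + (m-1) : ℕ):ℝ) = 2*(k:ℝ) + (m:ℝ) - 1 by
    push_cast [Nat.cast_sub (by omega : 1 ≤ m)]; ring]
  rw [show (2*(k:ℝ) + (m:ℝ) - 1 + 1) / ((2:ℕ):ℝ) = (k:ℝ) + (m:ℝ)/2 by push_cast; ring]
  norm_num
  ring

set_option maxHeartbeats 1000000 in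
/-- Let `τ = t + is` with `t, s` orthonormal unit vectors of `ℝ^m` (`m ≥ 2`), `τ† = -t + is`.
For every natural number `k`,
`∫_{S^{m-1}} ⟨ω,τ†⟩^k ⟨ω,τ⟩^k dS(ω) = (-1)^k · 2π^{m/2} · Γ(k+1)/Γ(k+m/2)`,
the integral being with respect to the surface measure on the unit sphere. -/
theorem sphere_integral_pairing_eq (m : ℕ) (hm : 2 ≤ m) (t s : Fin m → ℝ)
    (ht : ∑ j, t j ^ 2 = 1) (hs : ∑ j, s j ^ 2 = 1) (hts : ∑ j, t j * s j = 0) (k : ℕ) :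
    ∫ ω : Metric.sphere (0 : EuclideanSpace ℝ (Fin m)) 1,
        (∑ j, ((ω : EuclideanSpace ℝ (Fin m)) j : ℂ) * (-(t j : ℂ) + Complex.I * s j)) ^ k *
        (∑ j, ((ω : EuclideanSpace ℝ (Fin m)) j : ℂ) * ((t j : ℂ) + Complex.I * s j)) ^ k
        ∂((volume : Measure (EuclideanSpace ℝ (Fin m))).toSphere) =
      (-1 : ℂ) ^ k * ((2 * Real.pi ^ ((m : ℝ) / 2) *
        Real.Gamma (k + 1) / Real.Gamma (k + (m : ℝ) / 2) : ℝ) : ℂ) := by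
  classical
  set E := EuclideanSpace ℝ (Fin m)
  haveI : Nontrivial E := Module.nontrivial_of_finrank_pos (R := ℝ)
    (by rw [finrank_euclideanSpace_fin]; omega)
  set i₀ : Fin m := ⟨0, by omega⟩ with hi₀
  set i₁ : Fin m := ⟨1, by omega⟩ with hi₁
  have hne : i₀ ≠ i₁ := by simp [hi₀, hi₁, Fin.ext_iff]
  set H : E → ℝ :=
    fun x => ((∑ j, x j * t j) ^ 2 + (∑ j, x j * s j) ^ 2) ^ k with hHdef
  -- homogeneity
  have hH : ∀ (c : ℝ), 0 < c → ∀ x : E, H (c • x) = c ^ (2*k) * H x := by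
    intro c _ x
    have hA : (∑ j, (c • x) j * t j) = c * ∑ j, x j * t j := by
      rw [Finset.mul_sum]
      refine Finset.sum_congr rfl fun j _ => ?_
      show (c * x j) * t j = c * (x j * t j)
      ring
    have hB : (∑ j, (c • x) j * s j) = c * ∑ j, x j * s j := by
      rw [Finset.mul_sum]
      refine Finset.sum_congr rfl fun j _ => ?_
      show (c * x j) * s j = c * (x j * s j)
      ring
    rw [hHdef]
    simp only
    rw [hA, hB, show (c * ∑ j, x j * t j)^2 + (c * ∑ j, x j * s j)^2
      = c^2 * ((∑ j, x j * t j)^2 + (∑ j, x j * s j)^2) by ring, mul_pow, pow_mul]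
  -- the real sphere integral
  have key : ∫ ω : Metric.sphere (0 : E) 1, H ω ∂(volume : Measure E).toSphere
      = 2 * Real.pi ^ ((m:ℝ)/2) * Real.Gamma ((k:ℝ)+1) / Real.Gamma ((k:ℝ) + (m:ℝ)/2) := by
    -- Gaussian integral of H over E, computed two ways
    set Tv : E := (WithLp.equiv 2 (Fin m → ℝ)).symm t with hTv
    set Sv : E := (WithLp.equiv 2 (Fin m → ℝ)).symm s with hSv
    have ht' : ∑ j, t j * t j = 1 := by rw [← ht]; exact Finset.sum_congr rfl fun j _ => by ring
    have hs' : ∑ j, s j * s j = 1 := by rw [← hs]; exact Finset.sum_congr rfl fun j _ => by ring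
    have hts' : ∑ j, s j * t j = 0 := by rw [← hts]; exact Finset.sum_congr rfl fun j _ => by ring
    have hinner : ∀ a c : Fin m → ℝ,
        (inner ℝ (WithLp.toLp 2 a) (WithLp.toLp 2 c) : ℝ)
          = ∑ j, a j * c j := by
      intro a c
      rw [PiLp.inner_apply]
      simp [RCLike.inner_apply, mul_comm]
    have hortho : Orthonormal ℝ (({i₀, i₁} : Set (Fin m)).restrict
        (fun i => if i = i₀ then Tv else Sv)) := by
      rw [orthonormal_iff_ite]
      rintro ⟨i, hi⟩ ⟨j, hj⟩
      have hii : i = i₀ ∨ i = i₁ := hi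
      have hjj : j = i₀ ∨ j = i₁ := hj
      simp only [Set.restrict_apply, Subtype.mk_eq_mk]
      rcases hii with rfl | rfl <;> rcases hjj with rfl | rfl <;>
        simp [hne, hne.symm, hTv, hSv, hinner, ht', hs', hts, hts', Set.restrict,
          EuclideanSpace.real_norm_sq_eq, ht, hs]
      all_goals (left; rw [EuclideanSpace.norm_eq]; simp [ht, hs])
    obtain ⟨b, hb⟩ := hortho.exists_orthonormalBasis_extension_of_card_eq
      (by rw [finrank_euclideanSpace_fin, Fintype.card_fin])
    have hb0 : b i₀ = Tv := by rw [hb i₀ (by left; rfl), if_pos rfl]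
    have hb1 : b i₁ = Sv := by rw [hb i₁ (by right; rfl), if_neg hne.symm]
    have hrep0 : ∀ x : E, b.repr x i₀ = ∑ j, x j * t j := by
      intro x
      rw [b.repr_apply_apply, hb0, real_inner_comm, hTv, PiLp.inner_apply]
      simp [RCLike.inner_apply, mul_comm]
    have hrep1 : ∀ x : E, b.repr x i₁ = ∑ j, x j * s j := by
      intro x
      rw [b.repr_apply_apply, hb1, real_inner_comm, hSv, PiLp.inner_apply]
      simp [RCLike.inner_apply, mul_comm]
    have hnorm : ∀ y : E, ‖y‖^2 = ∑ j, (y j)^2 := by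
      intro y
      rw [EuclideanSpace.norm_eq, Real.sq_sqrt (by positivity)]
      refine Finset.sum_congr rfl fun j _ => ?_
      rw [Real.norm_eq_abs, sq_abs]
    have gauss : ∫ x, H x * Real.exp (-‖x‖^2) ∂(volume : Measure E)
        = Real.sqrt Real.pi ^ (m-2) * (Real.pi * k.factorial) := by
      have step1 : ∫ x, H x * Real.exp (-‖x‖^2) ∂(volume : Measure E)
          = ∫ y : E, ((y i₀)^2 + (y i₁)^2)^k * Real.exp (-‖y‖^2) ∂(volume : Measure E) := by
        rw [← (b.measurePreserving_repr).integral_comp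
          (show MeasurableEmbedding ⇑b.repr from b.repr.toHomeomorph.measurableEmbedding)
          (fun y : E => ((y i₀)^2 + (y i₁)^2)^k * Real.exp (-‖y‖^2))]
        refine integral_congr_ae (Filter.Eventually.of_forall fun x => ?_)
        show H x * Real.exp (-‖x‖^2)
          = ((b.repr x i₀)^2 + (b.repr x i₁)^2)^k * Real.exp (-‖b.repr x‖^2)
        rw [hrep0, hrep1, LinearIsometryEquiv.norm_map]
      have step2 : ∫ y : E, ((y i₀)^2 + (y i₁)^2)^k * Real.exp (-‖y‖^2) ∂(volume : Measure E)
          = ∫ z : Fin m → ℝ, ((z i₀)^2 + (z i₁)^2)^k * Real.exp (-∑ j, (z j)^2) := by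
        rw [← ((EuclideanSpace.volume_preserving_symm_measurableEquiv_toLp (Fin m)).symm _).integral_comp
          (MeasurableEquiv.measurableEmbedding _)
          (fun y : E => ((y i₀)^2 + (y i₁)^2)^k * Real.exp (-‖y‖^2))]
        refine integral_congr_ae (Filter.Eventually.of_forall fun z => ?_)
        have hco : ∀ j, ((MeasurableEquiv.toLp 2 (Fin m → ℝ)).symm.symm z) j = z j := fun j => rfl
        show ((((MeasurableEquiv.toLp 2 (Fin m → ℝ)).symm.symm z) i₀)^2
            + (((MeasurableEquiv.toLp 2 (Fin m → ℝ)).symm.symm z) i₁)^2)^k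
            * Real.exp (-‖(MeasurableEquiv.toLp 2 (Fin m → ℝ)).symm.symm z‖^2)
          = ((z i₀)^2 + (z i₁)^2)^k * Real.exp (-∑ j, (z j)^2)
        rw [hnorm]
        simp only [hco]
      rw [step1, step2, gauss_pi m k i₀ i₁ hne]
    have hpolar := polar_integral (volume : Measure E) k H hH
    rw [finrank_euclideanSpace_fin] at hpolar
    rw [radial_value m k hm, gauss] at hpolar
    have hΓpos : 0 < Real.Gamma ((k:ℝ) + (m:ℝ)/2) :=
      Real.Gamma_pos_of_pos (by positivity)
    have hpow : Real.pi ^ ((m:ℝ)/2) = Real.pi * Real.sqrt Real.pi ^ (m - 2) := by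
      rw [Real.sqrt_eq_rpow, ← Real.rpow_natCast (Real.pi ^ ((1:ℝ)/2)) (m-2),
        ← Real.rpow_mul Real.pi_pos.le,
        show ((m:ℝ)/2) = 1 + (1/2) * ((m-2:ℕ):ℝ) by
          rw [Nat.cast_sub (by omega : 2 ≤ m)]; push_cast; ring,
        Real.rpow_add Real.pi_pos, Real.rpow_one]
    have hfact : Real.Gamma ((k:ℝ)+1) = k.factorial := Real.Gamma_nat_eq_factorial k
    field_simp at hpolar ⊢
    rw [hfact, hpow]
    nlinarith [hpolar]
  -- reduce the complex integral to the real one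
  have hpoint : ∀ ω : Metric.sphere (0 : E) 1,
      (∑ j, ((ω : E) j : ℂ) * (-(t j : ℂ) + Complex.I * s j)) ^ k *
      (∑ j, ((ω : E) j : ℂ) * ((t j : ℂ) + Complex.I * s j)) ^ k
      = (-1:ℂ)^k * ((H (ω : E) : ℝ) : ℂ) := by
    intro ω
    set x : E := (ω : E)
    set A : ℝ := ∑ j, x j * t j with hA
    set B : ℝ := ∑ j, x j * s j with hB
    have e1 : ∑ j, (x j : ℂ) * (-(t j:ℂ) + Complex.I * s j) = -(A:ℂ) + Complex.I * B := by
      have h : ∀ j ∈ Finset.univ, (x j : ℂ) * (-(t j:ℂ) + Complex.I * s j)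
          = -(((x j * t j : ℝ)):ℂ) + Complex.I * ((x j * s j : ℝ):ℂ) := by
        intro j _; push_cast; ring
      rw [Finset.sum_congr rfl h, Finset.sum_add_distrib, Finset.sum_neg_distrib,
        ← Finset.mul_sum, ← Complex.ofReal_sum, ← Complex.ofReal_sum, hA, hB]
    have e2 : ∑ j, (x j : ℂ) * ((t j:ℂ) + Complex.I * s j) = (A:ℂ) + Complex.I * B := by
      have h : ∀ j ∈ Finset.univ, (x j : ℂ) * ((t j:ℂ) + Complex.I * s j)
          = (((x j * t j : ℝ)):ℂ) + Complex.I * ((x j * s j : ℝ):ℂ) := by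
        intro j _; push_cast; ring
      rw [Finset.sum_congr rfl h, Finset.sum_add_distrib,
        ← Finset.mul_sum, ← Complex.ofReal_sum, ← Complex.ofReal_sum, hA, hB]
    rw [e1, e2, ← mul_pow]
    have e3 : (-(A:ℂ) + Complex.I * B) * ((A:ℂ) + Complex.I * B) = -(((A^2 + B^2 : ℝ)):ℂ) := by
      push_cast
      linear_combination (B:ℂ)^2 * Complex.I_sq
    rw [e3, neg_pow, hHdef]
    simp only [hA, hB]
    push_cast
    ring
  calc ∫ ω : Metric.sphere (0 : E) 1,
        (∑ j, ((ω : E) j : ℂ) * (-(t j : ℂ) + Complex.I * s j)) ^ k *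
        (∑ j, ((ω : E) j : ℂ) * ((t j : ℂ) + Complex.I * s j)) ^ k
        ∂(volume : Measure E).toSphere
      = ∫ ω : Metric.sphere (0 : E) 1, (-1:ℂ)^k * ((H (ω : E) : ℝ) : ℂ)
          ∂(volume : Measure E).toSphere := by
        refine integral_congr_ae (Filter.Eventually.of_forall fun ω => hpoint ω)
    _ = (-1:ℂ)^k * ((∫ ω : Metric.sphere (0 : E) 1, H (ω : E)
          ∂(volume : Measure E).toSphere : ℝ) : ℂ) := by
        rw [integral_const_mul]
        congr 1
        exact integral_ofReal (𝕜 := ℂ)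
    _ = (-1 : ℂ) ^ k * ((2 * Real.pi ^ ((m : ℝ) / 2) *
        Real.Gamma (k + 1) / Real.Gamma (k + (m : ℝ) / 2) : ℝ) : ℂ) := by
        rw [key]
end

section
/- Pizzetti's formula: for a polynomial f on ℝ^m, the integral of f over the unit sphere S^{m-1} equals ∑_{k=0}^{∞} (2π^{m/2} / (4^k k! Γ(k + m/2))) (Δ^k f)(0), where Δ is the Laplacian and the sum is finite since f is a polynomial. -/
open MeasureTheory

/-- The Laplace operator `Δ = ∑ⱼ ∂²/∂xⱼ²` on polynomials in `m` variables. -/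
noncomputable def lap (m : ℕ) (p : MvPolynomial (Fin m) ℝ) : MvPolynomial (Fin m) ℝ :=
  ∑ j, MvPolynomial.pderiv j (MvPolynomial.pderiv j p)

open MvPolynomial Finset

noncomputable def lapL (m : ℕ) : Module.End ℝ (MvPolynomial (Fin m) ℝ) :=
  ∑ j : Fin m, ((pderiv (R := ℝ) j).toLinearMap * (pderiv (R := ℝ) j).toLinearMap)

lemma lap_eq_lapL (m : ℕ) (p : MvPolynomial (Fin m) ℝ) : lap m p = lapL m p := by
  simp [lap, lapL, Module.End.mul_apply]

lemma lap_iterate_eq (m k : ℕ) (p : MvPolynomial (Fin m) ℝ) :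
    (lap m)^[k] p = ((lapL m)^k) p := by
  induction k generalizing p with
  | zero => simp
  | succ k ih =>
    rw [Function.iterate_succ_apply, lap_eq_lapL, ih, pow_succ, Module.End.mul_apply]

/-- total degree of the exponent -/
def degS {m : ℕ} (α : Fin m →₀ ℕ) : ℕ := ∑ j, α j

noncomputable def Vmon {m : ℕ} (α : Fin m →₀ ℕ) : ℝ :=
  if ∀ j, Even (α j) then
    (Nat.factorial (degS α / 2) : ℝ) *
      ∏ j, ((Nat.factorial (α j) : ℝ) / (Nat.factorial (α j / 2) : ℝ))
  else 0

lemma lap_monomial {m : ℕ} (α : Fin m →₀ ℕ) (c : ℝ) :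
    lap m (monomial α c) =
      ∑ j : Fin m, monomial (α - Finsupp.single j 1 - Finsupp.single j 1)
        (c * (α j : ℝ) * ((α j - 1 : ℕ) : ℝ)) := by
  unfold lap
  refine Finset.sum_congr rfl fun j _ => ?_
  rw [pderiv_monomial, pderiv_monomial]
  simp [Finsupp.tsub_apply, mul_assoc]

lemma degS_pos {m : ℕ} {α : Fin m →₀ ℕ} (h : α ≠ 0) : 0 < degS α := by
  rcases Finsupp.ne_iff.1 h with ⟨i, hi⟩
  simp only [Finsupp.coe_zero, Pi.zero_apply] at hi
  exact Finset.sum_pos' (fun j _ => Nat.zero_le _) ⟨i, Finset.mem_univ i, Nat.pos_of_ne_zero hi⟩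

lemma eval0_monomial {m : ℕ} (α : Fin m →₀ ℕ) (c : ℝ) :
    MvPolynomial.eval (0 : Fin m → ℝ) (MvPolynomial.monomial α c) =
      if α = 0 then c else 0 := by
  rw [MvPolynomial.eval_monomial]
  split_ifs with h
  · subst h; simp
  · rcases Finsupp.ne_iff.1 h with ⟨i, hi⟩
    simp only [Finsupp.coe_zero, Pi.zero_apply] at hi
    rw [Finsupp.prod_fintype _ _ (fun i => pow_zero _)]
    rw [Finset.prod_eq_zero (Finset.mem_univ i) (by simp [zero_pow hi]), mul_zero]

lemma sub2_apply_ne {m : ℕ} (α : Fin m →₀ ℕ) {i j : Fin m} (hij : i ≠ j) :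
    ((α - Finsupp.single j 1 - Finsupp.single j 1 : Fin m →₀ ℕ)) i = α i := by
  simp [Finsupp.tsub_apply, Finsupp.single_apply, (Ne.symm hij : j ≠ i)]

lemma sub2_apply_same {m : ℕ} (α : Fin m →₀ ℕ) (j : Fin m) :
    ((α - Finsupp.single j 1 - Finsupp.single j 1 : Fin m →₀ ℕ)) j = α j - 2 := by
  simp [Finsupp.tsub_apply]
  omega

lemma degS_sub2 {m : ℕ} (α : Fin m →₀ ℕ) (j : Fin m) (h2 : 2 ≤ α j) :
    degS (α - Finsupp.single j 1 - Finsupp.single j 1) = degS α - 2 := by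
  unfold degS
  rw [← Finset.add_sum_erase _ _ (Finset.mem_univ j),
      ← Finset.add_sum_erase _ (fun i => α i) (Finset.mem_univ j),
      sub2_apply_same,
      Finset.sum_congr rfl (fun i hi => sub2_apply_ne α (Finset.ne_of_mem_erase hi))]
  omega

lemma Vmon_zero_of_odd {m : ℕ} {α : Fin m →₀ ℕ} (h : ¬ ∀ j, Even (α j)) : Vmon α = 0 := by
  rw [Vmon, if_neg h]

lemma factor_zero_of_le_one {a : ℕ} (h : a ≤ 1) : ((a : ℝ) * ((a - 1 : ℕ) : ℝ)) = 0 := by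
  interval_cases a <;> simp

lemma even_all_sub2 {m : ℕ} {α : Fin m →₀ ℕ} (hev : ∀ i, Even (α i)) (j : Fin m) (h2 : 2 ≤ α j) :
    ∀ i, Even ((α - Finsupp.single j 1 - Finsupp.single j 1 : Fin m →₀ ℕ) i) := by
  intro i
  rcases eq_or_ne i j with rfl | hij
  · rw [sub2_apply_same]
    have := hev i
    simp only [Nat.even_iff] at *
    omega
  · rw [sub2_apply_ne α hij]; exact hev i

lemma odd_witness_sub2 {m : ℕ} {α : Fin m →₀ ℕ} {i : Fin m} (hi : ¬ Even (α i)) (j : Fin m)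
    (h2 : 2 ≤ α j) :
    ¬ ∀ i', Even ((α - Finsupp.single j 1 - Finsupp.single j 1 : Fin m →₀ ℕ) i') := by
  intro hall
  rcases eq_or_ne i j with rfl | hij
  · have := hall i
    rw [sub2_apply_same] at this
    simp only [Nat.even_iff] at *
    omega
  · exact hi (by rw [← sub2_apply_ne α hij]; exact hall i)

lemma Vmon_recursion {m : ℕ} (k : ℕ) (α : Fin m →₀ ℕ) (hα : α ≠ 0) :
    (if 2 * (k+1) = degS α then Vmon α else 0) =
      ∑ j : Fin m, ((α j : ℝ) * ((α j - 1 : ℕ) : ℝ)) *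
        (if 2 * k = degS (α - Finsupp.single j 1 - Finsupp.single j 1)
         then Vmon (α - Finsupp.single j 1 - Finsupp.single j 1) else 0) := by
  by_cases hev : ∀ i, Even (α i)
  · by_cases hK : 2 * (k + 1) = degS α
    · -- main case
      rw [if_pos hK]
      set P : ℝ := ∏ i, ((Nat.factorial (α i) : ℝ) / (Nat.factorial (α i / 2) : ℝ)) with hP
      have hterm : ∀ j : Fin m,
          ((α j : ℝ) * ((α j - 1 : ℕ) : ℝ)) *
            (if 2 * k = degS (α - Finsupp.single j 1 - Finsupp.single j 1)
             then Vmon (α - Finsupp.single j 1 - Finsupp.single j 1) else 0) =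
          (Nat.factorial k : ℝ) * (α j / 2 : ℕ) * P := by
        intro j
        rcases Nat.lt_or_ge (α j) 2 with hj | hj
        · -- α j even and < 2 means α j = 0
          have hj0 : α j = 0 := by
            have := hev j; simp only [Nat.even_iff] at this; omega
          rw [factor_zero_of_le_one (by omega), zero_mul, hj0]
          simp
        · -- α j ≥ 2
          have hdeg : degS (α - Finsupp.single j 1 - Finsupp.single j 1) = 2 * k := by
            rw [degS_sub2 α j hj]; omega
          rw [if_pos hdeg.symm, Vmon, if_pos (even_all_sub2 hev j hj), hdeg]
          -- break products at j
          obtain ⟨b, hb⟩ : ∃ b, α j = 2 * b + 2 := by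
            have := hev j; simp only [Nat.even_iff] at this
            exact ⟨α j / 2 - 1, by omega⟩
          have hprod : ∏ i, ((Nat.factorial ((α - Finsupp.single j 1 - Finsupp.single j 1 : Fin m →₀ ℕ) i) : ℝ) /
              (Nat.factorial ((α - Finsupp.single j 1 - Finsupp.single j 1 : Fin m →₀ ℕ) i / 2) : ℝ)) =
              ((Nat.factorial (α j - 2) : ℝ) / (Nat.factorial ((α j - 2) / 2) : ℝ)) *
              ∏ i ∈ Finset.univ.erase j, ((Nat.factorial (α i) : ℝ) / (Nat.factorial (α i / 2) : ℝ)) := by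
            rw [← Finset.mul_prod_erase _ _ (Finset.mem_univ j), sub2_apply_same]
            exact congrArg _ (Finset.prod_congr rfl fun i hi => by
              rw [sub2_apply_ne α (Finset.ne_of_mem_erase hi)])
          have hPsplit : P = ((Nat.factorial (α j) : ℝ) / (Nat.factorial (α j / 2) : ℝ)) *
              ∏ i ∈ Finset.univ.erase j, ((Nat.factorial (α i) : ℝ) / (Nat.factorial (α i / 2) : ℝ)) := by
            rw [hP, ← Finset.mul_prod_erase _ _ (Finset.mem_univ j)]
          rw [hprod, hPsplit, Nat.mul_div_cancel_left k (by norm_num)]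
          have h1 : α j - 2 = 2 * b := by omega
          have h2 : (α j - 2) / 2 = b := by omega
          have h3 : α j / 2 = b + 1 := by omega
          have h4 : α j - 1 = 2 * b + 1 := by omega
          rw [h2, h1, h4, h3, hb]
          have e1 : Nat.factorial (2 * b + 2) = (2*b+2) * ((2*b+1) * Nat.factorial (2*b)) := by
            rw [show 2*b+2 = (2*b+1)+1 by ring, Nat.factorial_succ, Nat.factorial_succ]
          have e2 : Nat.factorial (b + 1) = (b+1) * Nat.factorial b := Nat.factorial_succ b
          rw [e1, e2]
          have hbf : (Nat.factorial b : ℝ) ≠ 0 := Nat.cast_ne_zero.2 (Nat.factorial_ne_zero b)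
          have hbf1 : ((b+1 : ℕ) : ℝ) ≠ 0 := by positivity
          push_cast
          field_simp
      rw [Finset.sum_congr rfl (fun j _ => hterm j)]
      -- now sum: ∑ j, k! * (α j / 2) * P = k! * (k+1) * P = (k+1)! * P
      have hsum : ∑ j : Fin m, (α j / 2) = k + 1 := by
        have h2 : ∑ j : Fin m, (α j / 2) * 2 = ∑ j : Fin m, α j := by
          refine Finset.sum_congr rfl fun j _ => ?_
          have := hev j; simp only [Nat.even_iff] at this; omega
        have h3 : (∑ j : Fin m, (α j / 2)) * 2 = degS α := by
          rw [Finset.sum_mul]; exact h2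
        omega
      rw [Vmon, if_pos hev, ← hP]
      have : ∑ j : Fin m, (Nat.factorial k : ℝ) * (α j / 2 : ℕ) * P =
          (Nat.factorial k : ℝ) * ((∑ j : Fin m, (α j / 2 : ℕ) : ℕ) : ℝ) * P := by
        rw [← Finset.sum_mul, ← Finset.mul_sum, Nat.cast_sum]
      rw [this, hsum]
      have hd2 : degS α / 2 = k + 1 := by omega
      rw [hd2, Nat.factorial_succ]
      push_cast
      ring
    · -- degree mismatch: both sides 0
      rw [if_neg hK]
      symm
      refine Finset.sum_eq_zero fun j _ => ?_
      rcases Nat.lt_or_ge (α j) 2 with hj | hj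
      · rw [factor_zero_of_le_one (by omega), zero_mul]
      · have hdeg : degS (α - Finsupp.single j 1 - Finsupp.single j 1) = degS α - 2 :=
          degS_sub2 α j hj
        have hd2 : 2 ≤ degS α := le_trans hj (Finset.single_le_sum (f := fun i => α i)
          (fun i _ => Nat.zero_le _) (Finset.mem_univ j))
        rw [if_neg (by omega), mul_zero]
  · -- some α i odd: both sides 0
    rcases not_forall.1 hev with ⟨i, hi⟩
    rw [Vmon_zero_of_odd hev, ite_self]
    symm
    refine Finset.sum_eq_zero fun j _ => ?_
    rcases Nat.lt_or_ge (α j) 2 with hj | hj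
    · rw [factor_zero_of_le_one (by omega), zero_mul]
    · rw [Vmon_zero_of_odd (odd_witness_sub2 hi j hj), ite_self, mul_zero]

lemma eval0_lap_iterate_monomial {m : ℕ} (k : ℕ) (α : Fin m →₀ ℕ) :
    MvPolynomial.eval (0 : Fin m → ℝ) ((lap m)^[k] (MvPolynomial.monomial α (1:ℝ))) =
      if 2 * k = degS α then Vmon α else 0 := by
  induction k generalizing α with
  | zero =>
    rw [Function.iterate_zero_apply, eval0_monomial]
    by_cases hα : α = 0
    · subst hα
      rw [if_pos rfl, if_pos (by simp [degS])]
      simp [Vmon, degS]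
    · rw [if_neg hα, if_neg (by have := degS_pos hα; omega)]
  | succ k ih =>
    by_cases hα : α = 0
    · subst hα
      have hz : lap m (MvPolynomial.monomial (0 : Fin m →₀ ℕ) (1:ℝ)) = 0 := by
        rw [lap_monomial]
        refine Finset.sum_eq_zero fun j _ => by simp
      rw [Function.iterate_succ_apply, hz, lap_iterate_eq, map_zero, map_zero]
      rw [if_neg (by simp [degS])]
    · rw [Function.iterate_succ_apply, lap_monomial, lap_iterate_eq, map_sum, map_sum]
      have hterm : ∀ j : Fin m,
          MvPolynomial.eval (0 : Fin m → ℝ) (((lapL m) ^ k)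
            (MvPolynomial.monomial (α - Finsupp.single j 1 - Finsupp.single j 1)
              (1 * (α j : ℝ) * ((α j - 1 : ℕ) : ℝ)))) =
          ((α j : ℝ) * ((α j - 1 : ℕ) : ℝ)) *
            (if 2 * k = degS (α - Finsupp.single j 1 - Finsupp.single j 1)
             then Vmon (α - Finsupp.single j 1 - Finsupp.single j 1) else 0) := by
        intro j
        rw [one_mul]
        have : MvPolynomial.monomial (α - Finsupp.single j 1 - Finsupp.single j 1)
            ((α j : ℝ) * ((α j - 1 : ℕ) : ℝ)) =
            ((α j : ℝ) * ((α j - 1 : ℕ) : ℝ)) •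
              MvPolynomial.monomial (α - Finsupp.single j 1 - Finsupp.single j 1) (1:ℝ) := by
          rw [MvPolynomial.smul_monomial, smul_eq_mul, mul_one]
        rw [this, LinearMap.map_smul, MvPolynomial.smul_eq_C_mul, map_mul,
          MvPolynomial.eval_C, ← lap_iterate_eq, ih]
      rw [Finset.sum_congr rfl fun j _ => hterm j, ← Vmon_recursion k α hα]

open Real in
lemma Gamma_nat_add_half (b : ℕ) :
    Real.Gamma ((b : ℝ) + 1/2) =
      Real.sqrt Real.pi * (Nat.factorial (2*b) : ℝ) / (4^b * (Nat.factorial b : ℝ)) := by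
  induction b with
  | zero =>
    simpa using Real.Gamma_one_half_eq
  | succ b ih =>
    have h1 : ((b+1 : ℕ) : ℝ) + 1/2 = ((b:ℝ) + 1/2) + 1 := by push_cast; ring
    rw [h1, Real.Gamma_add_one (by positivity), ih]
    have e1 : Nat.factorial (2*(b+1)) = (2*b+2) * ((2*b+1) * Nat.factorial (2*b)) := by
      rw [show 2*(b+1) = (2*b+1)+1 by ring, Nat.factorial_succ, Nat.factorial_succ]
    rw [e1, Nat.factorial_succ]
    have hbf : (Nat.factorial b : ℝ) ≠ 0 := Nat.cast_ne_zero.2 (Nat.factorial_ne_zero b)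
    have h4 : (4:ℝ)^b ≠ 0 := by positivity
    push_cast
    field_simp
    ring

lemma integrable_moment (a : ℕ) : Integrable (fun t : ℝ => t^a * Real.exp (-t^2)) := by
  have := integrable_rpow_mul_exp_neg_mul_sq (b := 1) one_pos
    (s := (a : ℝ)) (by linarith [Nat.cast_nonneg (α := ℝ) a])
  simpa [Real.rpow_natCast] using this

lemma integrableOn_moment_Ioi (a : ℕ) :
    IntegrableOn (fun t : ℝ => t^a * Real.exp (-t^2)) (Set.Ioi 0) :=
  (integrable_moment a).integrableOn

lemma integral_moment_Ioi (a : ℕ) :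
    ∫ t in Set.Ioi (0:ℝ), t^a * Real.exp (-t^2) = (1/2) * Real.Gamma (((a:ℝ)+1)/2) := by
  have h := integral_rpow_mul_exp_neg_rpow (p := 2) (q := (a:ℝ)) two_pos (by linarith [Nat.cast_nonneg (α := ℝ) a])
  have e : ∀ x : ℝ, x ^ ((a:ℝ)) * Real.exp (-x ^ (2:ℝ)) = x ^ a * Real.exp (-x^2) := by
    intro x
    rw [Real.rpow_natCast, show (2:ℝ) = ((2:ℕ):ℝ) by norm_num, Real.rpow_natCast]
  simp only [e] at h
  rw [h]

lemma integral_moment_split (a : ℕ) :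
    ∫ t : ℝ, t^a * Real.exp (-t^2) =
      (∫ t in Set.Ioi (0:ℝ), ((-t)^a * Real.exp (-t^2))) +
      ∫ t in Set.Ioi (0:ℝ), t^a * Real.exp (-t^2) := by
  rw [← MeasureTheory.integral_add_compl (measurableSet_Iic (a := (0:ℝ)))
    (integrable_moment a), Set.compl_Iic]
  congr 1
  have := integral_comp_neg_Ioi (0:ℝ) (fun t => t^a * Real.exp (-t^2))
  rw [neg_zero] at this
  rw [← this]
  refine setIntegral_congr_fun measurableSet_Ioi fun x _ => ?_
  rw [neg_sq]

lemma integral_moment_odd {a : ℕ} (ha : ¬ Even a) :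
    ∫ t : ℝ, t^a * Real.exp (-t^2) = 0 := by
  rw [integral_moment_split]
  have : ∀ t : ℝ, (-t)^a * Real.exp (-t^2) = -(t^a * Real.exp (-t^2)) := by
    intro t
    rw [(Nat.not_even_iff_odd.1 ha).neg_pow, neg_mul]
  simp only [this]
  rw [integral_neg]
  ring

lemma integral_moment_even (b : ℕ) :
    ∫ t : ℝ, t^(2*b) * Real.exp (-t^2) = Real.Gamma ((b:ℝ) + 1/2) := by
  rw [integral_moment_split]
  have : ∀ t : ℝ, (-t)^(2*b) * Real.exp (-t^2) = t^(2*b) * Real.exp (-t^2) := by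
    intro t
    rw [(even_two_mul b).neg_pow]
  simp only [this]
  rw [integral_moment_Ioi]
  have : (((2*b : ℕ):ℝ)+1)/2 = (b:ℝ) + 1/2 := by push_cast; ring
  rw [this]
  ring

open Metric Set in
lemma polar_integral_s10 {m : ℕ} (hm : 1 ≤ m) (g : EuclideanSpace ℝ (Fin m) → ℝ) (d : ℕ)
    (hg : ∀ (r : ℝ), 0 < r → ∀ x, g (r • x) = r^d * g x) :
    ∫ x : EuclideanSpace ℝ (Fin m), g x * Real.exp (-‖x‖^2) =
      (∫ ω : sphere (0 : EuclideanSpace ℝ (Fin m)) 1, g ω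
          ∂(volume : Measure (EuclideanSpace ℝ (Fin m))).toSphere) *
        ∫ r in Ioi (0:ℝ), r^(m - 1 + d) * Real.exp (-r^2) := by
  haveI : NeZero m := ⟨by omega⟩
  have h0 : ∫ x : EuclideanSpace ℝ (Fin m), g x * Real.exp (-‖x‖^2)
      = ∫ x : ({(0:EuclideanSpace ℝ (Fin m))}ᶜ : Set (EuclideanSpace ℝ (Fin m))),
          (g x.1 * Real.exp (-‖x.1‖^2))
          ∂((volume : Measure (EuclideanSpace ℝ (Fin m))).comap Subtype.val) := by
    rw [integral_subtype_comap (measurableSet_singleton (0:EuclideanSpace ℝ (Fin m))).compl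
        (fun x => g x * Real.exp (-‖x‖^2)), MeasureTheory.restrict_compl_singleton]
  have h1 : ∫ x : ({(0:EuclideanSpace ℝ (Fin m))}ᶜ : Set (EuclideanSpace ℝ (Fin m))),
          (g x.1 * Real.exp (-‖x.1‖^2))
          ∂((volume : Measure (EuclideanSpace ℝ (Fin m))).comap Subtype.val)
      = ∫ p : sphere (0:EuclideanSpace ℝ (Fin m)) 1 × Ioi (0:ℝ),
          (g ((p.2 : ℝ) • (p.1 : EuclideanSpace ℝ (Fin m))) * Real.exp (-((p.2:ℝ))^2))
          ∂((volume : Measure (EuclideanSpace ℝ (Fin m))).toSphere.prod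
            (Measure.volumeIoiPow (Module.finrank ℝ (EuclideanSpace ℝ (Fin m)) - 1))) := by
    rw [← (volume : Measure (EuclideanSpace ℝ (Fin m))).measurePreserving_homeomorphUnitSphereProd.integral_comp
        (Homeomorph.measurableEmbedding _)
        (fun p : sphere (0:EuclideanSpace ℝ (Fin m)) 1 × Ioi (0:ℝ) =>
          g ((p.2 : ℝ) • (p.1 : EuclideanSpace ℝ (Fin m))) * Real.exp (-((p.2:ℝ))^2))]
    refine integral_congr_ae (Filter.Eventually.of_forall fun x => ?_)
    dsimp only
    simp only [homeomorphUnitSphereProd_apply_fst_coe, homeomorphUnitSphereProd_apply_snd_coe]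
    rw [smul_inv_smul₀ (norm_ne_zero_iff.2 x.2)]
  have h2 : ∫ p : sphere (0:EuclideanSpace ℝ (Fin m)) 1 × Ioi (0:ℝ),
          (g ((p.2 : ℝ) • (p.1 : EuclideanSpace ℝ (Fin m))) * Real.exp (-((p.2:ℝ))^2))
          ∂((volume : Measure (EuclideanSpace ℝ (Fin m))).toSphere.prod
            (Measure.volumeIoiPow (Module.finrank ℝ (EuclideanSpace ℝ (Fin m)) - 1)))
      = ∫ p : sphere (0:EuclideanSpace ℝ (Fin m)) 1 × Ioi (0:ℝ),
          (g (p.1 : EuclideanSpace ℝ (Fin m)) * (((p.2:ℝ))^d * Real.exp (-((p.2:ℝ))^2)))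
          ∂((volume : Measure (EuclideanSpace ℝ (Fin m))).toSphere.prod
            (Measure.volumeIoiPow (Module.finrank ℝ (EuclideanSpace ℝ (Fin m)) - 1))) := by
    refine integral_congr_ae (Filter.Eventually.of_forall fun p => ?_)
    dsimp only
    rw [hg _ p.2.2 _]
    ring
  have h3 : ∫ r : Ioi (0:ℝ), ((r:ℝ)^d * Real.exp (-((r:ℝ))^2))
          ∂(Measure.volumeIoiPow (Module.finrank ℝ (EuclideanSpace ℝ (Fin m)) - 1))
      = ∫ r in Ioi (0:ℝ), r^(m-1+d) * Real.exp (-r^2) := by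
    simp only [Measure.volumeIoiPow, ENNReal.ofReal]
    rw [integral_withDensity_eq_integral_smul
        ((measurable_subtype_coe.pow_const _).real_toNNReal)
        (fun r : Ioi (0:ℝ) => (r:ℝ)^d * Real.exp (-((r:ℝ))^2))]
    rw [integral_subtype_comap measurableSet_Ioi
        (fun a : ℝ => Real.toNNReal (a ^ (Module.finrank ℝ (EuclideanSpace ℝ (Fin m)) - 1)) •
          (a^d * Real.exp (-a^2)))]
    refine setIntegral_congr_fun measurableSet_Ioi fun x hx => ?_
    rw [NNReal.smul_def, Real.coe_toNNReal _ (pow_nonneg hx.out.le _), smul_eq_mul]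
    rw [finrank_euclideanSpace_fin, pow_add, mul_assoc]
  rw [h0, h1, h2,
    MeasureTheory.integral_prod_mul (f := fun ω : sphere (0:EuclideanSpace ℝ (Fin m)) 1 => g ω)
      (g := fun r : Ioi (0:ℝ) => ((r:ℝ))^d * Real.exp (-((r:ℝ))^2)), h3]

lemma gaussian_monomial {m : ℕ} (α : Fin m →₀ ℕ) :
    ∫ x : EuclideanSpace ℝ (Fin m), (∏ j, (x j)^(α j)) * Real.exp (-‖x‖^2)
      = ∏ j, ∫ t : ℝ, t^(α j) * Real.exp (-t^2) := by
  have hpt : ∀ x : EuclideanSpace ℝ (Fin m),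
      (∏ j, (x j)^(α j)) * Real.exp (-‖x‖^2)
        = ∏ j, ((x j)^(α j) * Real.exp (-(x j)^2)) := by
    intro x
    rw [Finset.prod_mul_distrib]
    congr 1
    rw [EuclideanSpace.norm_eq, Real.sq_sqrt (by positivity)]
    rw [← Real.exp_sum]
    congr 1
    simp [Real.norm_eq_abs, sq_abs]
  simp only [hpt]
  rw [← MeasureTheory.integral_fintype_prod_eq_prod
    (fun j (t : ℝ) => t^(α j) * Real.exp (-t^2))]
  have h := (EuclideanSpace.volume_preserving_symm_measurableEquiv_toLp (Fin m)).integral_comp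
      (MeasurableEquiv.toLp 2 (Fin m → ℝ)).symm.measurableEmbedding
      (fun y : Fin m → ℝ => ∏ j, ((y j)^(α j) * Real.exp (-(y j)^2)))
  exact h

noncomputable def ck (m k : ℕ) : ℝ :=
  2 * Real.pi ^ ((m : ℝ)/2) / (4 ^ k * (Nat.factorial k : ℝ) * Real.Gamma ((k : ℝ) + (m:ℝ)/2))

open Metric Set in
lemma sphere_monomial_eq {m : ℕ} (hm : 1 ≤ m) (α : Fin m →₀ ℕ) :
    (∫ ω : sphere (0 : EuclideanSpace ℝ (Fin m)) 1,
        ∏ j, ((ω : EuclideanSpace ℝ (Fin m)) j)^(α j)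
        ∂(volume : Measure (EuclideanSpace ℝ (Fin m))).toSphere) *
      ((1/2) * Real.Gamma (((m + degS α : ℕ) : ℝ)/2))
    = ∏ j, ∫ t : ℝ, t^(α j) * Real.exp (-t^2) := by
  have hpol := polar_integral_s10 hm (fun x => ∏ j, (x j)^(α j)) (degS α) ?_
  · rw [← gaussian_monomial α, hpol, integral_moment_Ioi]
    congr 2
    have : m - 1 + degS α + 1 = m + degS α := by omega
    rw [show ((m - 1 + degS α : ℕ) : ℝ) + 1 = ((m - 1 + degS α + 1 : ℕ) : ℝ) by push_cast; ring,
      this]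
  · intro r hr x
    simp only [PiLp.smul_apply, smul_eq_mul]
    rw [Finset.prod_congr rfl (fun j _ => mul_pow r (x j) (α j)), Finset.prod_mul_distrib,
      Finset.prod_pow_eq_pow_sum]
    rfl

open Metric Set in
lemma sphere_monomial_tsum {m : ℕ} (hm : 1 ≤ m) (α : Fin m →₀ ℕ) :
    ∫ ω : sphere (0 : EuclideanSpace ℝ (Fin m)) 1,
        ∏ j, ((ω : EuclideanSpace ℝ (Fin m)) j)^(α j)
        ∂(volume : Measure (EuclideanSpace ℝ (Fin m))).toSphere
      = ∑' k : ℕ, ck m k * (if 2*k = degS α then Vmon α else 0) := by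
  have hGpos : 0 < Real.Gamma (((m + degS α : ℕ) : ℝ)/2) :=
    Real.Gamma_pos_of_pos (by
      have h1 : 0 < m + degS α := by omega
      have := Nat.cast_pos (α := ℝ) |>.2 h1
      linarith)
  have hG : ((1:ℝ)/2) * Real.Gamma (((m + degS α : ℕ) : ℝ)/2) ≠ 0 := by positivity
  have hSI := sphere_monomial_eq hm α
  by_cases hev : ∀ j, Even (α j)
  · -- all exponents even
    set K : ℕ := ∑ j, α j / 2 with hK
    have hdeg : degS α = 2 * K := by
      rw [hK, Finset.mul_sum]
      refine Finset.sum_congr rfl fun j _ => ?_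
      have := hev j; simp only [Nat.even_iff] at this; omega
    -- value of the tsum
    rw [tsum_eq_single K ?hne]
    case hne =>
      intro k hk
      rw [if_neg (by omega), mul_zero]
    rw [if_pos (by omega)]
    -- compute the sphere integral from hSI
    have hmom : ∀ j : Fin m, (∫ t : ℝ, t^(α j) * Real.exp (-t^2)) =
        Real.sqrt Real.pi * (((4:ℝ)^(α j / 2))⁻¹ *
          ((Nat.factorial (α j) : ℝ) / (Nat.factorial (α j / 2) : ℝ))) := by
      intro j
      have h2 : 2 * (α j / 2) = α j := by
        have := hev j; simp only [Nat.even_iff] at this; omega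
      conv_lhs => rw [← h2]
      rw [integral_moment_even, Gamma_nat_add_half, h2]
      have hb : (Nat.factorial (α j / 2) : ℝ) ≠ 0 := Nat.cast_ne_zero.2 (Nat.factorial_ne_zero _)
      have h4 : ((4:ℝ)^(α j / 2)) ≠ 0 := by positivity
      field_simp
    have hprod : ∏ j, (∫ t : ℝ, t^(α j) * Real.exp (-t^2)) =
        (Real.sqrt Real.pi)^m * ((4:ℝ)^K)⁻¹ *
          ∏ j, ((Nat.factorial (α j) : ℝ) / (Nat.factorial (α j / 2) : ℝ)) := by
      rw [Finset.prod_congr rfl fun j _ => hmom j, Finset.prod_mul_distrib,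
        Finset.prod_mul_distrib, Finset.prod_const, Finset.card_univ, Fintype.card_fin,
        Finset.prod_inv_distrib, Finset.prod_pow_eq_pow_sum, ← hK]
      ring
    have hpi : Real.pi ^ ((m:ℝ)/2) = (Real.sqrt Real.pi)^m := by
      rw [Real.sqrt_eq_rpow, ← Real.rpow_natCast (Real.pi ^ ((1:ℝ)/2)) m,
        ← Real.rpow_mul Real.pi_pos.le]
      congr 1
      ring
    have hVm : Vmon α = (Nat.factorial K : ℝ) *
        ∏ j, ((Nat.factorial (α j) : ℝ) / (Nat.factorial (α j / 2) : ℝ)) := by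
      rw [Vmon, if_pos hev, hdeg, Nat.mul_div_cancel_left K (by norm_num)]
    have hck : ck m K = 2 * (Real.sqrt Real.pi)^m /
        (4 ^ K * (Nat.factorial K : ℝ) * Real.Gamma (((m + degS α : ℕ) : ℝ)/2)) := by
      rw [ck, hpi]
      congr 3
      rw [hdeg]
      push_cast
      ring
    -- solve for the sphere integral
    have hSI' : ∫ ω : sphere (0 : EuclideanSpace ℝ (Fin m)) 1,
        ∏ j, ((ω : EuclideanSpace ℝ (Fin m)) j)^(α j)
        ∂(volume : Measure (EuclideanSpace ℝ (Fin m))).toSphere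
        = (∏ j, ∫ t : ℝ, t^(α j) * Real.exp (-t^2)) /
          ((1/2) * Real.Gamma (((m + degS α : ℕ) : ℝ)/2)) :=
      eq_div_of_mul_eq hG hSI
    rw [hSI', hprod, hck, hVm]
    have hKf : (Nat.factorial K : ℝ) ≠ 0 := Nat.cast_ne_zero.2 (Nat.factorial_ne_zero _)
    have h4K : ((4:ℝ)^K) ≠ 0 := by positivity
    have hGne : Real.Gamma (((m + degS α : ℕ) : ℝ)/2) ≠ 0 := ne_of_gt hGpos
    field_simp
  · -- some exponent odd
    rcases not_forall.1 hev with ⟨i, hi⟩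
    have hzero : ∏ j, (∫ t : ℝ, t^(α j) * Real.exp (-t^2)) = 0 :=
      Finset.prod_eq_zero (Finset.mem_univ i) (integral_moment_odd hi)
    have hSI' : ∫ ω : sphere (0 : EuclideanSpace ℝ (Fin m)) 1,
        ∏ j, ((ω : EuclideanSpace ℝ (Fin m)) j)^(α j)
        ∂(volume : Measure (EuclideanSpace ℝ (Fin m))).toSphere = 0 := by
      have := eq_div_of_mul_eq hG hSI
      rw [this, hzero, zero_div]
    rw [hSI', Vmon_zero_of_odd hev]
    simp

lemma eval0_lapk_monomial' {m : ℕ} (k : ℕ) (α : Fin m →₀ ℕ) (c : ℝ) :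
    MvPolynomial.eval (0 : Fin m → ℝ) (((lapL m) ^ k) (MvPolynomial.monomial α c)) =
      c * (if 2*k = degS α then Vmon α else 0) := by
  have h : MvPolynomial.monomial α c = c • MvPolynomial.monomial α (1:ℝ) := by
    rw [MvPolynomial.smul_monomial, smul_eq_mul, mul_one]
  rw [h, LinearMap.map_smul, MvPolynomial.smul_eq_C_mul, map_mul, MvPolynomial.eval_C,
    ← lap_iterate_eq, eval0_lap_iterate_monomial]

open Metric Set in
theorem pizzetti' (m : ℕ) (hm : 1 ≤ m) (f : MvPolynomial (Fin m) ℝ) :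
    ∫ ω : Metric.sphere (0 : EuclideanSpace ℝ (Fin m)) 1,
        MvPolynomial.eval (fun j => (ω : EuclideanSpace ℝ (Fin m)) j) f
        ∂((volume : Measure (EuclideanSpace ℝ (Fin m))).toSphere) =
      ∑' k : ℕ, (2 * Real.pi ^ ((m : ℝ) / 2) /
          (4 ^ k * (Nat.factorial k : ℝ) * Real.Gamma (k + (m : ℝ) / 2))) *
        MvPolynomial.eval (0 : Fin m → ℝ) ((lap m)^[k] f) := by
  classical
  haveI : NeZero m := ⟨by omega⟩
  -- integrability of monomials on the sphere
  have hint : ∀ α : Fin m →₀ ℕ,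
      Integrable (fun ω : sphere (0 : EuclideanSpace ℝ (Fin m)) 1 =>
        ∏ j, ((ω : EuclideanSpace ℝ (Fin m)) j)^(α j))
        (volume : Measure (EuclideanSpace ℝ (Fin m))).toSphere := by
    intro α
    refine Continuous.integrable_of_hasCompactSupport ?_ (HasCompactSupport.of_compactSpace _)
    refine continuous_finset_prod _ fun j _ => ?_
    exact ((EuclideanSpace.proj j).continuous.comp continuous_subtype_val).pow _
  -- LHS
  have hLHS : ∫ ω : Metric.sphere (0 : EuclideanSpace ℝ (Fin m)) 1,
        MvPolynomial.eval (fun j => (ω : EuclideanSpace ℝ (Fin m)) j) f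
        ∂((volume : Measure (EuclideanSpace ℝ (Fin m))).toSphere)
      = ∑ α ∈ f.support, MvPolynomial.coeff α f *
          ∫ ω : sphere (0 : EuclideanSpace ℝ (Fin m)) 1,
            ∏ j, ((ω : EuclideanSpace ℝ (Fin m)) j)^(α j)
            ∂(volume : Measure (EuclideanSpace ℝ (Fin m))).toSphere := by
    have hpt : ∀ ω : sphere (0 : EuclideanSpace ℝ (Fin m)) 1,
        MvPolynomial.eval (fun j => (ω : EuclideanSpace ℝ (Fin m)) j) f
          = ∑ α ∈ f.support, MvPolynomial.coeff α f *
              ∏ j, ((ω : EuclideanSpace ℝ (Fin m)) j)^(α j) := by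
      intro ω
      conv_lhs => rw [← MvPolynomial.support_sum_monomial_coeff f]
      rw [map_sum]
      refine Finset.sum_congr rfl fun α _ => ?_
      rw [MvPolynomial.eval_monomial, Finsupp.prod_fintype _ _ (fun j => pow_zero _)]
    rw [integral_congr_ae (Filter.Eventually.of_forall hpt),
      integral_finset_sum _ (fun α _ => (hint α).const_mul _)]
    exact Finset.sum_congr rfl fun α _ => integral_const_mul _ _
  -- RHS inner evaluation
  have hRk : ∀ k : ℕ, MvPolynomial.eval (0 : Fin m → ℝ) ((lap m)^[k] f)
      = ∑ α ∈ f.support, MvPolynomial.coeff α f * (if 2*k = degS α then Vmon α else 0) := by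
    intro k
    conv_lhs => rw [← MvPolynomial.support_sum_monomial_coeff f]
    rw [lap_iterate_eq, map_sum, map_sum]
    exact Finset.sum_congr rfl fun α _ => eval0_lapk_monomial' k α _
  have hsummable : ∀ α ∈ f.support, Summable (fun k : ℕ =>
      MvPolynomial.coeff α f * (ck m k * (if 2*k = degS α then Vmon α else 0))) := by
    intro α _
    refine summable_of_ne_finset_zero (s := Finset.range (degS α + 1)) fun k hk => ?_
    rw [Finset.mem_range] at hk
    rw [if_neg (by omega), mul_zero, mul_zero]
  calc ∫ ω : Metric.sphere (0 : EuclideanSpace ℝ (Fin m)) 1,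
        MvPolynomial.eval (fun j => (ω : EuclideanSpace ℝ (Fin m)) j) f
        ∂((volume : Measure (EuclideanSpace ℝ (Fin m))).toSphere)
      = ∑ α ∈ f.support, MvPolynomial.coeff α f *
          ∑' k : ℕ, ck m k * (if 2*k = degS α then Vmon α else 0) := by
        rw [hLHS]
        exact Finset.sum_congr rfl fun α _ => by rw [sphere_monomial_tsum hm α]
    _ = ∑ α ∈ f.support, ∑' k : ℕ, MvPolynomial.coeff α f *
          (ck m k * (if 2*k = degS α then Vmon α else 0)) := by
        exact Finset.sum_congr rfl fun α _ => (tsum_mul_left).symm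
    _ = ∑' k : ℕ, ∑ α ∈ f.support, MvPolynomial.coeff α f *
          (ck m k * (if 2*k = degS α then Vmon α else 0)) := (Summable.tsum_finsetSum hsummable).symm
    _ = ∑' k : ℕ, (2 * Real.pi ^ ((m : ℝ) / 2) /
          (4 ^ k * (Nat.factorial k : ℝ) * Real.Gamma (k + (m : ℝ) / 2))) *
        MvPolynomial.eval (0 : Fin m → ℝ) ((lap m)^[k] f) := by
        refine tsum_congr fun k => ?_
        rw [hRk k, Finset.mul_sum]
        refine Finset.sum_congr rfl fun α _ => ?_
        rw [ck]
        ring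


/-- Pizzetti's formula: for a polynomial `f` on `ℝ^m`,
`∫_{S^{m-1}} f dS = ∑_{k=0}^∞ (2π^{m/2}/(4^k k! Γ(k+m/2))) (Δ^k f)(0)`
(the series is finite since `Δ^k f = 0` for large `k`). -/
theorem pizzetti (m : ℕ) (hm : 1 ≤ m) (f : MvPolynomial (Fin m) ℝ) :
    ∫ ω : Metric.sphere (0 : EuclideanSpace ℝ (Fin m)) 1,
        MvPolynomial.eval (fun j => (ω : EuclideanSpace ℝ (Fin m)) j) f
        ∂((volume : Measure (EuclideanSpace ℝ (Fin m))).toSphere) =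
      ∑' k : ℕ, (2 * Real.pi ^ ((m : ℝ) / 2) /
          (4 ^ k * (Nat.factorial k : ℝ) * Real.Gamma (k + (m : ℝ) / 2))) *
        MvPolynomial.eval (0 : Fin m → ℝ) ((lap m)^[k] f) := by
  exact pizzetti' m hm f
end

section
/- Almansi–Fischer decomposition: every harmonic homogeneous polynomial H_k of degree k on ℝ^m (m ≥ 3, taking values in the Clifford algebra) decomposes uniquely as H_k(x) = M_k(x) + x·M_{k-1}(x), where M_k and M_{k-1} are monogenic homogeneous polynomials of degrees k and k-1 (i.e., in the kernel of the Dirac operator ∂_x = ∑ⱼ eⱼ∂_{xⱼ}), and explicitly M_k(x) = (1 + (1/(2k+m-2)) x ∂_x) H_k(x) and M_{k-1}(x) = -(1/(2k+m-2)) ∂_x H_k(x). -/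
open scoped TensorProduct

/-- The complex Clifford algebra `ℂ_m`: Clifford algebra of `v ↦ -∑ vⱼ²` on `ℂ^m`. -/
noncomputable def Qf (m : ℕ) : QuadraticForm ℂ (Fin m → ℂ) :=
  QuadraticMap.weightedSumSquares ℂ (fun _ : Fin m => (-1 : ℂ))

/-- Clifford-algebra-valued polynomials in `m` variables, realized as the tensor product
of the polynomial ring with the Clifford algebra. -/
abbrev PolyCl (m : ℕ) : Type := MvPolynomial (Fin m) ℂ ⊗[ℂ] CliffordAlgebra (Qf m)

/-- Partial derivative `∂/∂zⱼ` on Clifford-valued polynomials. -/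
noncomputable def pd (m : ℕ) (j : Fin m) : PolyCl m →ₗ[ℂ] PolyCl m :=
  LinearMap.rTensor (CliffordAlgebra (Qf m)) (MvPolynomial.pderiv j).toLinearMap

/-- The (complexified) Dirac operator `∂_z = ∑ⱼ eⱼ ∂_{zⱼ}` on Clifford-valued polynomials. -/
noncomputable def dirac (m : ℕ) (F : PolyCl m) : PolyCl m :=
  ∑ j, ((1 : MvPolynomial (Fin m) ℂ) ⊗ₜ[ℂ] CliffordAlgebra.ι (Qf m) (Pi.single j 1)) *
    pd m j F

/-- The vector variable `z = ∑ⱼ zⱼ eⱼ` as a Clifford-valued polynomial. -/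
noncomputable def zvec (m : ℕ) : PolyCl m :=
  ∑ j, (MvPolynomial.X j) ⊗ₜ[ℂ] CliffordAlgebra.ι (Qf m) (Pi.single j 1)

/-- A Clifford-valued polynomial is homogeneous of degree `k` if it is a sum of tensors
`p ⊗ c` with `p` homogeneous of degree `k`. -/
def homog (m : ℕ) (k : ℕ) (F : PolyCl m) : Prop :=
  F ∈ Submodule.span ℂ
    {x : PolyCl m | ∃ p c, MvPolynomial.IsHomogeneous p k ∧ x = p ⊗ₜ[ℂ] c}

/-- The Laplacian `Δ = -∂_z²` on Clifford-valued polynomials. -/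
noncomputable def lapCl (m : ℕ) (F : PolyCl m) : PolyCl m :=
  ∑ j, pd m j (pd m j F)


namespace AFAux

open MvPolynomial CliffordAlgebra

variable {m : ℕ}

/-! ### polynomial lemmas -/

lemma degree_eq_sum (s : Fin m →₀ ℕ) : s.degree = ∑ j, s j := by
  rw [Finsupp.degree]
  exact Finset.sum_subset (Finset.subset_univ _) (by simp)

lemma degree_of_mem_support {k : ℕ} {p : MvPolynomial (Fin m) ℂ}
    (hp : p.IsHomogeneous k) {s : Fin m →₀ ℕ} (hs : s ∈ p.support) : s.degree = k := by
  by_contra h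
  exact (MvPolynomial.mem_support_iff.mp hs) (hp.coeff_eq_zero h)

lemma X_mul_pderiv_monomial (s : Fin m →₀ ℕ) (a : ℂ) (j : Fin m) :
    X j * pderiv j (monomial s a) = ((s j : ℂ)) • monomial s a := by
  rw [pderiv_monomial]
  rcases Nat.eq_zero_or_pos (s j) with h | h
  · simp [h]
  · have hs : Finsupp.single j 1 + (s - Finsupp.single j 1) = s := by
      ext i
      rcases eq_or_ne i j with rfl | hij
      · simp [Finsupp.single_apply]; omega
      · simp [Finsupp.single_apply, Ne.symm hij]
    rw [X, monomial_mul, one_mul, hs, smul_monomial, smul_eq_mul, mul_comm]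

lemma poly_euler {k : ℕ} {p : MvPolynomial (Fin m) ℂ} (hp : p.IsHomogeneous k) :
    ∑ j, X j * pderiv j p = (k : ℂ) • p := by
  have step : ∑ j, X j * pderiv j p
      = ∑ j, ∑ s ∈ p.support, X j * pderiv j (monomial s (coeff s p)) := by
    refine Finset.sum_congr rfl fun j _ => ?_
    conv_lhs => rw [← p.support_sum_monomial_coeff]
    rw [map_sum, Finset.mul_sum]
  rw [step, Finset.sum_comm]
  conv_rhs => rw [← p.support_sum_monomial_coeff]
  rw [Finset.smul_sum]
  refine Finset.sum_congr rfl fun s hs => ?_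
  have hd : s.degree = k := degree_of_mem_support hp hs
  calc ∑ j, X j * pderiv j (monomial s (coeff s p))
      = ∑ j, ((s j : ℂ)) • monomial s (coeff s p) := by
        exact Finset.sum_congr rfl fun j _ => X_mul_pderiv_monomial s _ j
    _ = ((∑ j, s j : ℕ) : ℂ) • monomial s (coeff s p) := by
        rw [← Finset.sum_smul]; norm_num
    _ = (k : ℂ) • monomial s (coeff s p) := by rw [← degree_eq_sum, hd]

lemma isHomogeneous_pderiv {k : ℕ} {p : MvPolynomial (Fin m) ℂ}
    (hp : p.IsHomogeneous k) (j : Fin m) : (pderiv j p).IsHomogeneous (k - 1) := by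
  conv_lhs => rw [← p.support_sum_monomial_coeff]
  rw [map_sum]
  refine IsHomogeneous.sum _ _ _ fun s hs => ?_
  rw [pderiv_monomial]
  rcases Nat.eq_zero_or_pos (s j) with h | h
  · simp [h]
    exact isHomogeneous_zero _ _ _
  · refine isHomogeneous_monomial _ ?_
    have hd : s.degree = k := degree_of_mem_support hp hs
    rw [degree_eq_sum] at hd ⊢
    have h1 : ∀ i, ((s - Finsupp.single j 1 : Fin m →₀ ℕ)) i = if i = j then s j - 1 else s i := by
      intro i
      rw [Finsupp.tsub_apply, Finsupp.single_apply]
      rcases eq_or_ne i j with rfl | hij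
      · simp
      · simp [Ne.symm hij, hij]
    have h2 : ∑ i, ((s - Finsupp.single j 1 : Fin m →₀ ℕ)) i
        = (s j - 1) + ∑ i ∈ Finset.univ.erase j, s i := by
      rw [← Finset.add_sum_erase _ _ (Finset.mem_univ j), h1]
      simp only [if_pos rfl]
      congr 1
      exact Finset.sum_congr rfl fun i hi => by
        rw [h1, if_neg (Finset.mem_erase.mp hi).1]
    rw [h2]
    rw [← Finset.add_sum_erase _ _ (Finset.mem_univ j)] at hd
    omega

lemma pderiv_eq_zero_of_homog0 {p : MvPolynomial (Fin m) ℂ}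
    (hp : p.IsHomogeneous 0) (j : Fin m) : pderiv j p = 0 := by
  conv_lhs => rw [← p.support_sum_monomial_coeff]
  rw [map_sum]
  refine Finset.sum_eq_zero fun s hs => ?_
  have hd : s.degree = 0 := degree_of_mem_support hp hs
  rw [degree_eq_sum] at hd
  have : s j = 0 := by
    have := Finset.sum_eq_zero_iff.mp hd j (Finset.mem_univ j)
    exact this
  simp [pderiv_monomial, this]

lemma pderiv_comm (i j : Fin m) (p : MvPolynomial (Fin m) ℂ) :
    pderiv i (pderiv j p) = pderiv j (pderiv i p) := by
  induction p using MvPolynomial.induction_on' with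
  | add p q hp hq => simp [map_add, hp, hq]
  | monomial s a =>
    rcases eq_or_ne i j with rfl | hij
    · rfl
    · simp only [pderiv_monomial]
      have h1 : ((s - Finsupp.single j 1 : Fin m →₀ ℕ)) i = s i := by
        rw [Finsupp.tsub_apply, Finsupp.single_apply, if_neg (Ne.symm hij), Nat.sub_zero]
      have h2 : ((s - Finsupp.single i 1 : Fin m →₀ ℕ)) j = s j := by
        rw [Finsupp.tsub_apply, Finsupp.single_apply, if_neg hij, Nat.sub_zero]
      have h3 : s - Finsupp.single j 1 - Finsupp.single i 1
          = s - Finsupp.single i 1 - Finsupp.single j 1 := by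
        ext l; simp only [Finsupp.tsub_apply]; omega
      rw [h1, h2, h3, mul_right_comm]

end AFAux

set_option maxHeartbeats 1000000
set_option synthInstance.maxHeartbeats 200000

namespace AFAux
open MvPolynomial CliffordAlgebra

variable {m : ℕ}

/-! ### Clifford lemmas -/

lemma Qf_single (j : Fin m) : Qf m (Pi.single j 1) = -1 := by
  classical
  simp [Qf, QuadraticMap.weightedSumSquares_apply, Pi.single_apply]

lemma Qf_single_add {i j : Fin m} (hij : i ≠ j) :
    Qf m (Pi.single i 1 + Pi.single j 1) = -2 := by
  classical
  have h : ∀ l, ((Pi.single i 1 + Pi.single j 1 : Fin m → ℂ) l)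
        * ((Pi.single i 1 + Pi.single j 1 : Fin m → ℂ) l)
      = (if l = i then 1 else 0) + (if l = j then 1 else 0) := by
    intro l
    rcases eq_or_ne l i with rfl | hli
    · simp [Pi.single_apply, hij, Ne.symm hij]
    · rcases eq_or_ne l j with rfl | hlj
      · simp [Pi.single_apply, hli, Ne.symm hli]
      · simp [Pi.single_apply, hli, hlj, Ne.symm hli, Ne.symm hlj]
  simp only [Qf, QuadraticMap.weightedSumSquares_apply, Pi.add_apply]
  have h' : ∀ l, (-1 : ℂ) • (((Pi.single i 1 : Fin m → ℂ) l + (Pi.single j 1 : Fin m → ℂ) l)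
        * ((Pi.single i 1 : Fin m → ℂ) l + (Pi.single j 1 : Fin m → ℂ) l))
      = -((if l = i then 1 else 0) + (if l = j then 1 else 0)) := by
    intro l
    rw [smul_eq_mul, neg_one_mul, ← h l]
    rfl
  rw [Finset.sum_congr rfl fun l _ => h' l, Finset.sum_neg_distrib,
    Finset.sum_add_distrib]
  simp [Finset.sum_ite_eq']
  norm_num

lemma polar_single (i j : Fin m) :
    QuadraticMap.polar (⇑(Qf m)) (Pi.single i 1) (Pi.single j 1)
      = if i = j then -2 else 0 := by
  rcases eq_or_ne i j with rfl | hij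
  · have h2 : (Pi.single i 1 + Pi.single i 1 : Fin m → ℂ) = Pi.single i 2 := by
      rw [← Pi.single_add]; norm_num
    have h4 : Qf m (Pi.single i (2:ℂ)) = -4 := by
      classical
      simp [Qf, QuadraticMap.weightedSumSquares_apply, Pi.single_apply]
      norm_num
    rw [QuadraticMap.polar, h2, h4, Qf_single, if_pos rfl]
    norm_num
  · rw [QuadraticMap.polar, Qf_single, Qf_single, Qf_single_add hij, if_neg hij]
    ring

/-- The generator `eⱼ` as an element of `PolyCl m`. -/
noncomputable def E (m : ℕ) (j : Fin m) : PolyCl m :=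
  (1 : MvPolynomial (Fin m) ℂ) ⊗ₜ[ℂ] CliffordAlgebra.ι (Qf m) (Pi.single j 1)

/-- `Xⱼ ⊗ 1` as an element of `PolyCl m`. -/
noncomputable def Xt (m : ℕ) (j : Fin m) : PolyCl m :=
  (MvPolynomial.X j : MvPolynomial (Fin m) ℂ) ⊗ₜ[ℂ] (1 : CliffordAlgebra (Qf m))

lemma E_mul_E_self (j : Fin m) : E m j * E m j = (-1 : ℂ) • 1 := by
  rw [E, Algebra.TensorProduct.tmul_mul_tmul, ι_sq_scalar, Qf_single, one_mul,
    map_neg, map_one, TensorProduct.tmul_neg]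
  rw [show ((1:MvPolynomial (Fin m) ℂ) ⊗ₜ[ℂ] (1 : CliffordAlgebra (Qf m)))
      = (1 : PolyCl m) from rfl]
  module

lemma E_mul_E_add (i j : Fin m) :
    E m i * E m j + E m j * E m i
      = if i = j then (-2 : ℂ) • (1 : PolyCl m) else 0 := by
  simp only [E]
  rw [Algebra.TensorProduct.tmul_mul_tmul, Algebra.TensorProduct.tmul_mul_tmul,
    one_mul, ← TensorProduct.tmul_add, ι_mul_ι_add_swap, polar_single]
  rcases eq_or_ne i j with rfl | hij
  · rw [if_pos rfl, if_pos rfl, Algebra.algebraMap_eq_smul_one, TensorProduct.tmul_smul]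
    rw [show ((1:MvPolynomial (Fin m) ℂ) ⊗ₜ[ℂ] (1 : CliffordAlgebra (Qf m)))
        = (1 : PolyCl m) from rfl]
  · rw [if_neg hij, if_neg hij, map_zero, TensorProduct.tmul_zero]

end AFAux

namespace AFAux
open MvPolynomial CliffordAlgebra

variable {m : ℕ}

/-! ### operator lemmas -/

noncomputable def diracL (m : ℕ) : PolyCl m →ₗ[ℂ] PolyCl m :=
  ∑ j, (LinearMap.mulLeft ℂ (E m j)).comp (pd m j)

noncomputable def eulerL (m : ℕ) : PolyCl m →ₗ[ℂ] PolyCl m :=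
  ∑ j, (LinearMap.mulLeft ℂ (Xt m j)).comp (pd m j)

lemma dirac_eqE (F : PolyCl m) : dirac m F = ∑ j, E m j * pd m j F := rfl

lemma dirac_eq (F : PolyCl m) : dirac m F = diracL m F := by
  simp [dirac, diracL, E, LinearMap.sum_apply]

lemma eulerL_apply (F : PolyCl m) : eulerL m F = ∑ j, Xt m j * pd m j F := by
  simp [eulerL, LinearMap.sum_apply]

lemma dirac_add (F G : PolyCl m) : dirac m (F + G) = dirac m F + dirac m G := by
  simp [dirac_eq, map_add]

lemma dirac_smul (a : ℂ) (F : PolyCl m) : dirac m (a • F) = a • dirac m F := by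
  simp [dirac_eq, map_smul]

lemma dirac_zero : dirac m 0 = 0 := by simp [dirac_eq, map_zero]

lemma pd_one_tmul (j : Fin m) (c : CliffordAlgebra (Qf m)) :
    pd m j ((1 : MvPolynomial (Fin m) ℂ) ⊗ₜ[ℂ] c) = 0 := by
  simp [pd, pderiv_one]

lemma pd_E (j i : Fin m) : pd m j (E m i) = 0 := pd_one_tmul j _

lemma pd_mul (j : Fin m) (F G : PolyCl m) :
    pd m j (F * G) = pd m j F * G + F * pd m j G := by
  induction F using TensorProduct.induction_on with
  | zero => simp
  | add x y hx hy =>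
    simp only [add_mul, map_add, hx, hy]
    abel
  | tmul p c =>
    induction G using TensorProduct.induction_on with
    | zero => simp
    | add x y hx hy =>
      simp only [mul_add, map_add, hx, hy]
      abel
    | tmul q d =>
      simp only [pd, Algebra.TensorProduct.tmul_mul_tmul, LinearMap.rTensor_tmul,
        Derivation.coeFn_coe, pderiv_mul, TensorProduct.add_tmul]

lemma pd_comm (i j : Fin m) (F : PolyCl m) : pd m i (pd m j F) = pd m j (pd m i F) := by
  induction F using TensorProduct.induction_on with
  | zero => simp
  | add x y hx hy => simp [map_add, hx, hy]
  | tmul p c =>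
    simp only [pd, LinearMap.rTensor_tmul, Derivation.coeFn_coe]
    rw [pderiv_comm]

lemma pd_zvec (j : Fin m) : pd m j (zvec m) = E m j := by
  rw [zvec, map_sum, Finset.sum_eq_single j]
  · simp [pd, E, pderiv_X_self]
  · intro i _ hij
    simp [pd, pderiv_X_of_ne hij]
  · intro h; exact absurd (Finset.mem_univ j) h

/-- Dirac squared is minus the Laplacian. -/
lemma dirac_dirac (F : PolyCl m) : dirac m (dirac m F) = (-1 : ℂ) • lapCl m F := by
  have expand : dirac m (dirac m F)
      = ∑ i, ∑ j, (E m i * E m j) * pd m i (pd m j F) := by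
    rw [dirac_eqE]
    refine Finset.sum_congr rfl fun i _ => ?_
    rw [dirac_eqE, map_sum, Finset.mul_sum]
    refine Finset.sum_congr rfl fun j _ => ?_
    rw [pd_mul, pd_E, zero_mul, zero_add, mul_assoc]
  have expand' : dirac m (dirac m F)
      = ∑ i, ∑ j, (E m j * E m i) * pd m i (pd m j F) := by
    rw [expand, Finset.sum_comm]
    refine Finset.sum_congr rfl fun i _ => Finset.sum_congr rfl fun j _ => ?_
    rw [pd_comm]
  have key : (2:ℂ) • dirac m (dirac m F) = (-2:ℂ) • lapCl m F := by
    rw [two_smul]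
    have step1 : dirac m (dirac m F) + dirac m (dirac m F)
        = ∑ i, ∑ j, ((E m i * E m j) + (E m j * E m i)) * pd m i (pd m j F) := by
      nth_rewrite 1 [expand]
      rw [expand', ← Finset.sum_add_distrib]
      refine Finset.sum_congr rfl fun i _ => ?_
      rw [← Finset.sum_add_distrib]
      exact Finset.sum_congr rfl fun j _ => (add_mul _ _ _).symm
    rw [step1]
    calc ∑ i, ∑ j, ((E m i * E m j) + (E m j * E m i)) * pd m i (pd m j F)
        = ∑ i, ∑ j, (if i = j then (-2 : ℂ) • (1 : PolyCl m) else 0) * pd m i (pd m j F) :=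
          Finset.sum_congr rfl fun i _ => Finset.sum_congr rfl fun j _ => by
            rw [E_mul_E_add]
      _ = ∑ i, ((-2 : ℂ) • (1 : PolyCl m)) * pd m i (pd m i F) := by
          refine Finset.sum_congr rfl fun i _ => ?_
          rw [Finset.sum_eq_single i]
          · rw [if_pos rfl]
          · intro j _ hji; rw [if_neg (Ne.symm hji), zero_mul]
          · intro h; exact absurd (Finset.mem_univ i) h
      _ = (-2:ℂ) • lapCl m F := by
          rw [lapCl, Finset.smul_sum]
          exact Finset.sum_congr rfl fun i _ => by
            rw [smul_mul_assoc, one_mul]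
  have h2 : ((2:ℂ))⁻¹ • ((2:ℂ) • dirac m (dirac m F))
      = ((2:ℂ))⁻¹ • ((-2:ℂ) • lapCl m F) := by rw [key]
  rw [inv_smul_smul₀ (by norm_num : (2:ℂ) ≠ 0), smul_smul,
    show ((2:ℂ)⁻¹ * (-2:ℂ)) = (-1:ℂ) by norm_num] at h2
  exact h2

/-- Anticommutation of `eⱼ` and `z`. -/
lemma E_mul_zvec_add (j : Fin m) :
    E m j * zvec m + zvec m * E m j = (-2 : ℂ) • Xt m j := by
  rw [zvec, Finset.sum_mul, Finset.mul_sum, ← Finset.sum_add_distrib]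
  have term : ∀ i, E m j * (X i ⊗ₜ[ℂ] CliffordAlgebra.ι (Qf m) (Pi.single i 1))
      + (X i ⊗ₜ[ℂ] CliffordAlgebra.ι (Qf m) (Pi.single i 1)) * E m j
      = if j = i then (-2 : ℂ) • Xt m j else 0 := by
    intro i
    simp only [E]
    rw [Algebra.TensorProduct.tmul_mul_tmul, Algebra.TensorProduct.tmul_mul_tmul,
      one_mul, mul_one, ← TensorProduct.tmul_add, ι_mul_ι_add_swap, polar_single]
    rcases eq_or_ne j i with rfl | hij
    · rw [if_pos rfl, if_pos rfl, Algebra.algebraMap_eq_smul_one,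
        TensorProduct.tmul_smul, Xt]
    · rw [if_neg hij, if_neg hij, map_zero, TensorProduct.tmul_zero]
  rw [Finset.sum_congr rfl fun i _ => term i, Finset.sum_ite_eq Finset.univ j
    (fun _ => (-2 : ℂ) • Xt m j), if_pos (Finset.mem_univ j)]

lemma E_sq_mul (j : Fin m) (F : PolyCl m) : E m j * (E m j * F) = (-1:ℂ) • F := by
  rw [← mul_assoc, E_mul_E_self, smul_mul_assoc, one_mul]

/-- The key commutation identity: `∂(z F) = -m F - 2 E F - z ∂F`. -/
lemma dirac_zvec_mul (F : PolyCl m) :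
    dirac m (zvec m * F)
      = -((m : ℂ) • F) - (2:ℂ) • eulerL m F - zvec m * dirac m F := by
  have expand : dirac m (zvec m * F)
      = ∑ j, (E m j * (E m j * F) + (E m j * zvec m) * pd m j F) := by
    rw [dirac_eqE]
    refine Finset.sum_congr rfl fun j _ => ?_
    rw [pd_mul, pd_zvec, mul_add]
    congr 1
    exact (mul_assoc _ _ _).symm
  rw [expand, Finset.sum_add_distrib]
  have part1 : ∑ j : Fin m, E m j * (E m j * F) = -((m : ℂ) • F) := by
    rw [Finset.sum_congr rfl fun j _ => E_sq_mul j F, Finset.sum_const,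
      Finset.card_univ, Fintype.card_fin, ← Nat.cast_smul_eq_nsmul ℂ]
    module
  have part2 : ∑ j, (E m j * zvec m) * pd m j F
      = -((2:ℂ) • eulerL m F) - zvec m * dirac m F := by
    have hEz : ∀ j, E m j * zvec m = (-2 : ℂ) • Xt m j - zvec m * E m j :=
      fun j => eq_sub_of_add_eq (E_mul_zvec_add j)
    calc ∑ j, (E m j * zvec m) * pd m j F
        = ∑ j, (((-2 : ℂ) • Xt m j) * pd m j F - (zvec m * E m j) * pd m j F) := by
          refine Finset.sum_congr rfl fun j _ => ?_
          rw [hEz j, sub_mul]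
      _ = -((2:ℂ) • eulerL m F) - zvec m * dirac m F := by
          rw [Finset.sum_sub_distrib]
          congr 1
          · calc ∑ j, ((-2 : ℂ) • Xt m j) * pd m j F
                = ∑ j, (-2 : ℂ) • (Xt m j * pd m j F) :=
                  Finset.sum_congr rfl fun j _ => smul_mul_assoc _ _ _
              _ = (-2 : ℂ) • ∑ j, Xt m j * pd m j F := (Finset.smul_sum).symm
              _ = -((2:ℂ) • eulerL m F) := by
                  rw [eulerL_apply]
                  module
          · rw [dirac_eqE, Finset.mul_sum]
            exact Finset.sum_congr rfl fun j _ => mul_assoc _ _ _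
  rw [part1, part2]
  abel

end AFAux

namespace AFAux
open MvPolynomial CliffordAlgebra

variable {m : ℕ}

/-! ### homogeneity lemmas -/

/-- The span defining `homog` as a submodule. -/
noncomputable def homogSub (m k : ℕ) : Submodule ℂ (PolyCl m) :=
  Submodule.span ℂ {x : PolyCl m | ∃ p c, MvPolynomial.IsHomogeneous p k ∧ x = p ⊗ₜ[ℂ] c}

lemma homog_iff {k : ℕ} {F : PolyCl m} : homog m k F ↔ F ∈ homogSub m k := Iff.rfl

lemma homog_tmul {k : ℕ} {p : MvPolynomial (Fin m) ℂ} (hp : p.IsHomogeneous k)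
    (c : CliffordAlgebra (Qf m)) : homog m k (p ⊗ₜ[ℂ] c) :=
  Submodule.subset_span ⟨p, c, hp, rfl⟩

lemma homog_zero (k : ℕ) : homog m k (0 : PolyCl m) := (homogSub m k).zero_mem

lemma homog_add {k : ℕ} {F G : PolyCl m} (hF : homog m k F) (hG : homog m k G) :
    homog m k (F + G) := (homogSub m k).add_mem hF hG

lemma homog_smul {k : ℕ} (a : ℂ) {F : PolyCl m} (hF : homog m k F) :
    homog m k (a • F) := (homogSub m k).smul_mem a hF

/-- General principle: a linear map sending generators of degree `k` into
`homogSub m l` maps `homogSub m k` into it. -/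
lemma homog_map {k l : ℕ} {F : PolyCl m} (hF : homog m k F) (T : PolyCl m →ₗ[ℂ] PolyCl m)
    (hT : ∀ (p : MvPolynomial (Fin m) ℂ) (c : CliffordAlgebra (Qf m)),
      p.IsHomogeneous k → homog m l (T (p ⊗ₜ[ℂ] c))) : homog m l (T F) := by
  refine Submodule.span_induction ?_ ?_ ?_ ?_ hF
  · rintro x ⟨p, c, hp, rfl⟩
    exact hT p c hp
  · rw [map_zero]; exact homog_zero l
  · intro x y _ _ hx hy
    rw [map_add]; exact homog_add hx hy
  · intro a x _ hx
    rw [map_smul]; exact homog_smul a hx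

lemma homog_pd {k : ℕ} {F : PolyCl m} (hF : homog m k F) (j : Fin m) :
    homog m (k - 1) (pd m j F) := by
  refine homog_map hF (pd m j) fun p c hp => ?_
  rw [pd, LinearMap.rTensor_tmul, Derivation.coeFn_coe]
  exact homog_tmul (isHomogeneous_pderiv hp j) c

lemma homog_E_mul {k : ℕ} (i : Fin m) {F : PolyCl m} (hF : homog m k F) :
    homog m k (E m i * F) := by
  refine homog_map hF (LinearMap.mulLeft ℂ (E m i)) fun p c hp => ?_
  rw [LinearMap.mulLeft_apply, E, Algebra.TensorProduct.tmul_mul_tmul, one_mul]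
  exact homog_tmul hp _

lemma homog_dirac {k : ℕ} {F : PolyCl m} (hF : homog m k F) :
    homog m (k - 1) (dirac m F) := by
  rw [dirac]
  refine Submodule.sum_mem _ fun j _ => ?_
  exact homog_E_mul j (homog_pd hF j)

lemma homog_zvec_mul {k : ℕ} {F : PolyCl m} (hF : homog m k F) :
    homog m (k + 1) (zvec m * F) := by
  refine homog_map hF (LinearMap.mulLeft ℂ (zvec m)) fun p c hp => ?_
  rw [LinearMap.mulLeft_apply, zvec, Finset.sum_mul]
  refine Submodule.sum_mem _ fun j _ => ?_
  rw [Algebra.TensorProduct.tmul_mul_tmul]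
  have hX := (isHomogeneous_X ℂ j).mul hp
  rw [add_comm] at hX
  exact homog_tmul hX _

lemma euler_homog {k : ℕ} {F : PolyCl m} (hF : homog m k F) :
    eulerL m F = (k : ℂ) • F := by
  refine Submodule.span_induction ?_ ?_ ?_ ?_ hF
  · rintro x ⟨p, c, hp, rfl⟩
    rw [eulerL, LinearMap.sum_apply]
    calc ∑ j, ((LinearMap.mulLeft ℂ (Xt m j)).comp (pd m j)) (p ⊗ₜ[ℂ] c)
        = ∑ j, (X j * pderiv j p) ⊗ₜ[ℂ] c := by
          refine Finset.sum_congr rfl fun j _ => ?_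
          rw [LinearMap.comp_apply, LinearMap.mulLeft_apply, pd,
            LinearMap.rTensor_tmul, Derivation.coeFn_coe, Xt,
            Algebra.TensorProduct.tmul_mul_tmul, one_mul]
      _ = (∑ j, X j * pderiv j p) ⊗ₜ[ℂ] c := by rw [TensorProduct.sum_tmul]
      _ = (k : ℂ) • (p ⊗ₜ[ℂ] c) := by rw [poly_euler hp, TensorProduct.smul_tmul']
  · rw [map_zero, smul_zero]
  · intro x y _ _ hx hy
    rw [map_add, hx, hy, smul_add]
  · intro a x _ hx
    rw [map_smul, hx, smul_comm]

lemma pd_of_homog0 {F : PolyCl m} (hF : homog m 0 F) (j : Fin m) : pd m j F = 0 := by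
  refine Submodule.span_induction ?_ ?_ ?_ ?_ hF
  · rintro x ⟨p, c, hp, rfl⟩
    rw [pd, LinearMap.rTensor_tmul, Derivation.coeFn_coe,
      pderiv_eq_zero_of_homog0 hp, TensorProduct.zero_tmul]
  · rw [map_zero]
  · intro x y _ _ hx hy; rw [map_add, hx, hy, add_zero]
  · intro a x _ hx; rw [map_smul, hx, smul_zero]

lemma dirac_of_homog0 {F : PolyCl m} (hF : homog m 0 F) : dirac m F = 0 := by
  rw [dirac]
  refine Finset.sum_eq_zero fun j _ => ?_
  rw [pd_of_homog0 hF, mul_zero]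

lemma euler_of_homog {k : ℕ} {F : PolyCl m} (hF : homog m k F) :
    eulerL m F = (k : ℂ) • F := euler_homog hF

end AFAux

open AFAux in
/-- Almansi–Fischer decomposition: every harmonic homogeneous Clifford-valued polynomial
`H` of degree `k` on `ℝ^m` (`m ≥ 3`) decomposes uniquely as `H = M_k + z·M_{k-1}` with
`M_k, M_{k-1}` monogenic homogeneous of degrees `k, k-1`, and explicitly
`M_k = (1 + (1/(2k+m-2)) z ∂_z) H` and `M_{k-1} = -(1/(2k+m-2)) ∂_z H`. -/
theorem almansi_fischer (m k : ℕ) (hm : 3 ≤ m) (H : PolyCl m)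
    (hH : homog m k H) (hharm : lapCl m H = 0) :
    let c : ℂ := 1 / (2 * k + m - 2)
    let Mk : PolyCl m := H + c • (zvec m * dirac m H)
    let Mk1 : PolyCl m := (-c) • dirac m H
    H = Mk + zvec m * Mk1 ∧
    dirac m Mk = 0 ∧ dirac m Mk1 = 0 ∧
    homog m k Mk ∧ homog m (k - 1) Mk1 ∧
    (∀ A B : PolyCl m, dirac m A = 0 → dirac m B = 0 →
      homog m k A → homog m (k - 1) B → H = A + zvec m * B → A = Mk ∧ B = Mk1) := by
  intro c Mk Mk1
  have hmC : (m : ℂ) ≠ 0 := by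
    exact_mod_cast Nat.cast_ne_zero.mpr (by omega)
  have hδ : (2 * (k:ℂ) + m - 2) ≠ 0 := by
    have h2 : (2:ℕ) ≤ 2*k + m := by omega
    have hcast : (2*(k:ℂ) + m - 2) = ((2*k + m - 2 : ℕ) : ℂ) := by
      rw [Nat.cast_sub h2]; push_cast; ring
    rw [hcast]
    exact Nat.cast_ne_zero.mpr (by omega)
  have hc : c * (2*(k:ℂ) + m - 2) = 1 := by
    show (1 / (2 * (k:ℂ) + m - 2)) * (2*(k:ℂ) + m - 2) = 1
    field_simp
  have hDD : dirac m (dirac m H) = 0 := by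
    rw [dirac_dirac, hharm, smul_zero]
  have hDhom : homog m (k-1) (dirac m H) := homog_dirac hH
  rcases Nat.eq_zero_or_pos k with hk | hk
  · -- k = 0
    subst hk
    have hD0 : dirac m H = 0 := dirac_of_homog0 hH
    have hMk : Mk = H := by
      show H + c • (zvec m * dirac m H) = H
      rw [hD0, mul_zero, smul_zero, add_zero]
    have hMk1 : Mk1 = 0 := by
      show (-c) • dirac m H = 0
      rw [hD0, smul_zero]
    refine ⟨?_, ?_, ?_, ?_, ?_, ?_⟩
    · rw [hMk, hMk1, mul_zero, add_zero]
    · rw [hMk, hD0]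
    · rw [hMk1, dirac_zero]
    · rw [hMk]; exact hH
    · rw [hMk1]; exact homog_zero _
    · intro A B dA dB hA hB hAB
      have hstep : dirac m (zvec m * B)
          = -((m : ℂ) • B) - (2:ℂ) • eulerL m B - zvec m * dirac m B :=
        dirac_zvec_mul B
      have hEB : eulerL m B = ((0:ℕ) : ℂ) • B := euler_homog hB
      have hDHB : (0 : PolyCl m) = -((m : ℂ) • B) := by
        calc (0 : PolyCl m) = dirac m H := hD0.symm
          _ = dirac m A + dirac m (zvec m * B) := by rw [hAB, dirac_add]
          _ = -((m : ℂ) • B) := by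
              rw [dA, hstep, hEB, dB, mul_zero, zero_add]
              simp
      have hB0 : B = 0 := by
        have : (m : ℂ) • B = 0 := by
          have := hDHB.symm
          rw [neg_eq_zero] at this
          exact this
        exact (smul_eq_zero.mp this).resolve_left hmC
      constructor
      · rw [hMk, hAB, hB0, mul_zero, add_zero]
      · rw [hMk1, hB0]
  · -- k ≥ 1
    have hk1 : ((k-1:ℕ) : ℂ) = (k:ℂ) - 1 := by
      push_cast [Nat.cast_sub hk]
      ring
    have hδ' : -((m : ℂ)) - 2 * ((k:ℂ) - 1) = -(2*(k:ℂ) + m - 2) := by ring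
    have hzD : dirac m (zvec m * dirac m H) = (-(2*(k:ℂ) + m - 2)) • dirac m H := by
      rw [dirac_zvec_mul, euler_homog hDhom, hk1, hDD, mul_zero, sub_zero]
      module
    refine ⟨?_, ?_, ?_, ?_, ?_, ?_⟩
    · show H = (H + c • (zvec m * dirac m H)) + zvec m * ((-c) • dirac m H)
      rw [mul_smul_comm]
      module
    · show dirac m (H + c • (zvec m * dirac m H)) = 0
      rw [dirac_add, dirac_smul, hzD, smul_smul, mul_neg, hc, neg_one_smul]
      abel
    · show dirac m ((-c) • dirac m H) = 0
      rw [dirac_smul, hDD, smul_zero]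
    · refine homog_add hH (homog_smul c ?_)
      have := homog_zvec_mul hDhom
      rwa [Nat.sub_add_cancel hk] at this
    · exact homog_smul _ hDhom
    · intro A B dA dB hA hB hAB
      have hEB : eulerL m B = ((k:ℂ) - 1) • B := by rw [← hk1]; exact euler_homog hB
      have hDH : dirac m H = (-(2*(k:ℂ) + m - 2)) • B := by
        calc dirac m H = dirac m A + dirac m (zvec m * B) := by rw [hAB, dirac_add]
          _ = (-(2*(k:ℂ) + m - 2)) • B := by
              rw [dA, zero_add, dirac_zvec_mul, hEB, dB, mul_zero, sub_zero]
              module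
      have hB : B = Mk1 := by
        show B = (-c) • dirac m H
        rw [hDH, smul_smul]
        have : -c * -(2*(k:ℂ) + m - 2) = 1 := by
          rw [neg_mul_neg]; exact hc
        rw [this, one_smul]
      constructor
      · show A = H + c • (zvec m * dirac m H)
        have : A = H - zvec m * B := by
          rw [hAB]; abel
        rw [this, hB]
        show H - zvec m * ((-c) • dirac m H) = H + c • (zvec m * dirac m H)
        rw [mul_smul_comm]
        module
      · exact hB
end

section
/- Recurrence for Dirac derivatives of the ψ functions: let τ = t + is with t, s orthonormal unit vectors in ℝ^m, define ψ_{τ,2s',k}(z) = τ ⟨z,τ⟩^{s'+k} ⟨z,τ†⟩^{s'} and ψ_{τ,2s'+1,k}(z) = τ†τ ⟨z,τ⟩^{s'+k+1} ⟨z,τ†⟩^{s'}. Then ∂_z ψ_{τ,2s'+1,k}(z) = 4(s'+k+1) ψ_{τ,2s',k}(z) and ∂_z ψ_{τ,2s'+2,k}(z) = (s'+1) ψ_{τ,2s'+1,k}(z). In particular ψ_{τ,0,k}(z) = τ⟨z,τ⟩^k is monogenic for every k. -/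
open scoped TensorProduct

open MvPolynomial CliffordAlgebra TensorProduct

lemma Qf_apply (m : ℕ) (u : Fin m → ℂ) : Qf m u = -∑ j, u j ^ 2 := by
  simp [Qf, QuadraticMap.weightedSumSquares_apply, sq]

lemma dirac_tmul (m : ℕ) (p : MvPolynomial (Fin m) ℂ) (c : CliffordAlgebra (Qf m)) :
    dirac m (p ⊗ₜ[ℂ] c) =
      ∑ j, (MvPolynomial.pderiv j p) ⊗ₜ[ℂ] (ι (Qf m) (Pi.single j 1) * c) := by
  simp [dirac, pd, Algebra.TensorProduct.tmul_mul_tmul]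

lemma single_sum (m : ℕ) (u : Fin m → ℂ) (q : MvPolynomial (Fin m) ℂ)
    (c : CliffordAlgebra (Qf m)) :
    ∑ j, (MvPolynomial.C (u j) * q) ⊗ₜ[ℂ] (ι (Qf m) (Pi.single j 1) * c)
      = q ⊗ₜ[ℂ] (ι (Qf m) u * c) := by
  have hu : ι (Qf m) u = ∑ j, u j • ι (Qf m) (Pi.single j 1) := by
    have h : u = ∑ j, u j • (Pi.single j 1 : Fin m → ℂ) := by
      ext i
      simp [Pi.single_apply, eq_comm]
    conv_lhs => rw [h, map_sum]
    simp
  rw [hu, Finset.sum_mul, tmul_sum]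
  refine Finset.sum_congr rfl fun j _ => ?_
  rw [← smul_eq_C_mul, smul_tmul, smul_mul_assoc]

lemma pderiv_lin (m : ℕ) (u : Fin m → ℂ) (j : Fin m) :
    MvPolynomial.pderiv j (∑ i, MvPolynomial.C (u i) * MvPolynomial.X i) = C (u j) := by
  rw [map_sum]
  rw [Finset.sum_eq_single j]
  · simp
  · intro i _ hij
    simp [MvPolynomial.pderiv_X, Pi.single_apply, hij]
  · simp

lemma dirac_pow (m : ℕ) (u v : Fin m → ℂ) (a b : ℕ) (c : CliffordAlgebra (Qf m)) :
    dirac m (((∑ i, MvPolynomial.C (u i) * MvPolynomial.X i) ^ a *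
        (∑ i, MvPolynomial.C (v i) * MvPolynomial.X i) ^ b) ⊗ₜ[ℂ] c) =
      (a : ℂ) • (((∑ i, MvPolynomial.C (u i) * MvPolynomial.X i) ^ (a - 1) *
          (∑ i, MvPolynomial.C (v i) * MvPolynomial.X i) ^ b) ⊗ₜ[ℂ] (ι (Qf m) u * c)) +
      (b : ℂ) • (((∑ i, MvPolynomial.C (u i) * MvPolynomial.X i) ^ a *
          (∑ i, MvPolynomial.C (v i) * MvPolynomial.X i) ^ (b - 1)) ⊗ₜ[ℂ] (ι (Qf m) v * c)) := by
  set pu : MvPolynomial (Fin m) ℂ := ∑ i, MvPolynomial.C (u i) * MvPolynomial.X i with hpu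
  set pv : MvPolynomial (Fin m) ℂ := ∑ i, MvPolynomial.C (v i) * MvPolynomial.X i with hpv
  have key : ∀ j, MvPolynomial.pderiv j (pu ^ a * pv ^ b) =
      MvPolynomial.C (u j) * (MvPolynomial.C ((a : ℂ)) * (pu ^ (a-1) * pv ^ b)) +
      MvPolynomial.C (v j) * (MvPolynomial.C ((b : ℂ)) * (pu ^ a * pv ^ (b-1))) := by
    intro j
    rw [Derivation.leibniz, Derivation.leibniz_pow, Derivation.leibniz_pow,
      hpu, pderiv_lin, hpv, pderiv_lin]
    rw [← hpu, ← hpv]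
    simp only [smul_eq_C_mul, smul_eq_mul, nsmul_eq_mul, MvPolynomial.C_eq_coe_nat]
    ring
  rw [dirac_tmul]
  simp only [key, add_tmul, Finset.sum_add_distrib, single_sum]
  rw [← smul_eq_C_mul, ← smul_eq_C_mul, smul_tmul', smul_tmul']

/-- Recurrence for Dirac derivatives of the `ψ` functions: for `τ = t + is` with `t, s`
orthonormal unit vectors of `ℝ^m` and `τ† = -t + is`, setting
`ψ_{τ,2s',k}(z) = τ ⟨z,τ⟩^{s'+k} ⟨z,τ†⟩^{s'}` and
`ψ_{τ,2s'+1,k}(z) = τ†τ ⟨z,τ⟩^{s'+k+1} ⟨z,τ†⟩^{s'}`, one has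
`∂_z ψ_{τ,2s'+1,k} = 4(s'+k+1) ψ_{τ,2s',k}`, `∂_z ψ_{τ,2s'+2,k} = (s'+1) ψ_{τ,2s'+1,k}`;
in particular `ψ_{τ,0,k} = τ⟨z,τ⟩^k` is monogenic for every `k`. -/

theorem psi_recurrence (m : ℕ) (t s : Fin m → ℝ)
    (ht : ∑ j, t j ^ 2 = 1) (hs : ∑ j, s j ^ 2 = 1) (hts : ∑ j, t j * s j = 0) :
    let τ : Fin m → ℂ := fun j => (t j : ℂ) + Complex.I * s j
    let τd : Fin m → ℂ := fun j => -(t j : ℂ) + Complex.I * s j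
    let pτ : MvPolynomial (Fin m) ℂ := ∑ j, MvPolynomial.C (τ j) * MvPolynomial.X j
    let pτd : MvPolynomial (Fin m) ℂ := ∑ j, MvPolynomial.C (τd j) * MvPolynomial.X j
    let ψeven : ℕ → ℕ → PolyCl m := fun s' k =>
      (pτ ^ (s' + k) * pτd ^ s') ⊗ₜ[ℂ] CliffordAlgebra.ι (Qf m) τ
    let ψodd : ℕ → ℕ → PolyCl m := fun s' k =>
      (pτ ^ (s' + k + 1) * pτd ^ s') ⊗ₜ[ℂ]
        (CliffordAlgebra.ι (Qf m) τd * CliffordAlgebra.ι (Qf m) τ)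
    (∀ k : ℕ, dirac m (ψeven 0 k) = 0) ∧
    (∀ s' k : ℕ, dirac m (ψodd s' k) = ((4 * (s' + k + 1) : ℕ) : ℂ) • ψeven s' k) ∧
    (∀ s' k : ℕ, dirac m (ψeven (s' + 1) k) = ((s' + 1 : ℕ) : ℂ) • ψodd s' k) := by
  intro τ τd pτ pτd ψeven ψodd
  have ht' : ∑ j, (t j : ℂ) ^ 2 = 1 := by exact_mod_cast congrArg (fun x : ℝ => (x : ℂ)) ht
  have hs' : ∑ j, (s j : ℂ) ^ 2 = 1 := by exact_mod_cast congrArg (fun x : ℝ => (x : ℂ)) hs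
  have hts' : ∑ j, (t j : ℂ) * s j = 0 := by
    exact_mod_cast congrArg (fun x : ℝ => (x : ℂ)) hts
  have hQτ : Qf m τ = 0 := by
    rw [Qf_apply]
    have : ∑ j, τ j ^ 2 = ∑ j, ((t j:ℂ)^2 - (s j:ℂ)^2 + (2*Complex.I) * ((t j:ℂ) * s j)) := by
      refine Finset.sum_congr rfl fun j _ => ?_
      show ((t j : ℂ) + Complex.I * s j) ^ 2 = _
      ring_nf
      rw [Complex.I_sq]
      ring
    rw [this, Finset.sum_add_distrib, Finset.sum_sub_distrib, ← Finset.mul_sum,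
      ht', hs', hts']
    ring
  have hQτd : Qf m τd = 0 := by
    rw [Qf_apply]
    have : ∑ j, τd j ^ 2 = ∑ j, ((t j:ℂ)^2 - (s j:ℂ)^2 - (2*Complex.I) * ((t j:ℂ) * s j)) := by
      refine Finset.sum_congr rfl fun j _ => ?_
      show (-(t j : ℂ) + Complex.I * s j) ^ 2 = _
      ring_nf
      rw [Complex.I_sq]
      ring
    rw [this, Finset.sum_sub_distrib, Finset.sum_sub_distrib, ← Finset.mul_sum,
      ht', hs', hts']
    ring
  have hpolar : QuadraticMap.polar (Qf m) τ τd = 4 := by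
    rw [QuadraticMap.polar, hQτ, hQτd, Qf_apply]
    have : ∑ j, (τ + τd) j ^ 2 = ∑ j, (-4 : ℂ) * (s j:ℂ)^2 := by
      refine Finset.sum_congr rfl fun j _ => ?_
      show (((t j : ℂ) + Complex.I * s j) + (-(t j : ℂ) + Complex.I * s j)) ^ 2 = _
      ring_nf
      rw [Complex.I_sq]
      ring
    rw [this, ← Finset.mul_sum, hs']
    ring
  have hττ : ι (Qf m) τ * ι (Qf m) τ = 0 := by rw [ι_sq_scalar, hQτ, map_zero]
  have hτdτd : ι (Qf m) τd * ι (Qf m) τd = 0 := by rw [ι_sq_scalar, hQτd, map_zero]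
  have hswap : ι (Qf m) τ * ι (Qf m) τd = algebraMap ℂ _ 4 - ι (Qf m) τd * ι (Qf m) τ := by
    rw [eq_sub_iff_add_eq, ι_mul_ι_add_swap, hpolar]
  have hmix : ι (Qf m) τ * (ι (Qf m) τd * ι (Qf m) τ) = (4 : ℂ) • ι (Qf m) τ := by
    rw [← mul_assoc, hswap, sub_mul, mul_assoc, hττ, mul_zero, sub_zero, Algebra.smul_def]
  refine ⟨fun k => ?_, fun s' k => ?_, fun s' k => ?_⟩
  · show dirac m (((∑ j, MvPolynomial.C (τ j) * MvPolynomial.X j) ^ (0 + k) *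
        (∑ j, MvPolynomial.C (τd j) * MvPolynomial.X j) ^ 0) ⊗ₜ[ℂ] ι (Qf m) τ) = 0
    rw [dirac_pow m τ τd]
    simp [hττ]
  · show dirac m (((∑ j, MvPolynomial.C (τ j) * MvPolynomial.X j) ^ (s' + k + 1) *
        (∑ j, MvPolynomial.C (τd j) * MvPolynomial.X j) ^ s') ⊗ₜ[ℂ]
        (ι (Qf m) τd * ι (Qf m) τ)) = ((4 * (s' + k + 1) : ℕ) : ℂ) •
        (((∑ j, MvPolynomial.C (τ j) * MvPolynomial.X j) ^ (s' + k) *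
          (∑ j, MvPolynomial.C (τd j) * MvPolynomial.X j) ^ s') ⊗ₜ[ℂ] ι (Qf m) τ)
    rw [dirac_pow m τ τd]
    rw [← mul_assoc (ι (Qf m) τd), hτdτd, zero_mul]
    rw [hmix]
    simp only [Nat.add_sub_cancel, tmul_zero, smul_zero, add_zero, tmul_smul, smul_smul]
    push_cast
    ring_nf
  · show dirac m (((∑ j, MvPolynomial.C (τ j) * MvPolynomial.X j) ^ (s' + 1 + k) *
        (∑ j, MvPolynomial.C (τd j) * MvPolynomial.X j) ^ (s' + 1)) ⊗ₜ[ℂ] ι (Qf m) τ)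
        = ((s' + 1 : ℕ) : ℂ) •
        (((∑ j, MvPolynomial.C (τ j) * MvPolynomial.X j) ^ (s' + k + 1) *
          (∑ j, MvPolynomial.C (τd j) * MvPolynomial.X j) ^ s') ⊗ₜ[ℂ]
          (ι (Qf m) τd * ι (Qf m) τ))
    rw [dirac_pow m τ τd]
    rw [hττ]
    simp only [Nat.add_sub_cancel, tmul_zero, smul_zero, zero_add]
    rw [show s' + 1 + k = s' + k + 1 from by omega]
end
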